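/- arXiv:2507.03786 — 3 statements merged into one kernel-verified Lean document; each statement's English description precedes it below -/
import Mathlib

section
/- Let k be an integer, I and H multigraphs on the finite set V, U ⊆ V, and let f and P be as defined. Let x ∈ P satisfy 0 < x_e < 1 for every e ∈ E, where E ≠ ∅, and suppose there exists a laminar x-defining family L. Then there is an x-core C such that |δ_E(C)| ∈ {2, 3} and f(C) ∈ {1, 2}; moreover, no edge of E has both endpoints in C. -/
open Finset

variable {V : Type*} [Fintype V] [DecidableEq V] {E : Type*} [Fintype E] [DecidableEq E]

/-- `d_m(S,T)`: total multiplicity of edges of the multigraph `m` with one end in `S` and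
the other in `T` (for disjoint `S`, `T`). -/
def dBetween (m : V → V → ℕ) (S T : Finset V) : ℕ := ∑ u ∈ S, ∑ v ∈ T, m u v

/-- `d_m(S) = d_m(S, V \ S)`. -/
def degS (m : V → V → ℕ) (S : Finset V) : ℕ := dBetween m S Sᶜ

/-- Edges of the edge-indexed multigraph `(V, E)` (endpoint map `ends`) with exactly one
endpoint in `S`. -/
def cutEdges (ends : E → V × V) (S : Finset V) : Finset E :=
  univ.filter fun e => ((ends e).1 ∈ S ∧ (ends e).2 ∉ S) ∨ ((ends e).1 ∉ S ∧ (ends e).2 ∈ S)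

/-- A cut is a nonempty proper subset of `V`. -/
def IsCut (S : Finset V) : Prop := S.Nonempty ∧ S ≠ univ

/-- The relaxed residual function `f`:
`f(S) = k - d_I(S) - 2 d_H(S) - 2` if `S = {u}` or `V \ S = {u}` for some `u ∈ U`,
and `f(S) = k - d_I(S) - 2 d_H(S)` otherwise. -/
def fRes (k : ℤ) (I H : V → V → ℕ) (U : Finset V) (S : Finset V) : ℤ :=
  if ∃ u ∈ U, S = {u} ∨ Sᶜ = {u} then
    k - (degS I S : ℤ) - 2 * (degS H S : ℤ) - 2
  else
    k - (degS I S : ℤ) - 2 * (degS H S : ℤ)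

/-- The polytope `P = {x ∈ [0,1]^E : x(δ_E(S)) ≥ f(S) for every cut S}`. -/
def polyP (k : ℤ) (I H : V → V → ℕ) (U : Finset V) (ends : E → V × V) : Set (E → ℝ) :=
  {x | (∀ e, 0 ≤ x e ∧ x e ≤ 1) ∧
    ∀ S : Finset V, IsCut S → (fRes k I H U S : ℝ) ≤ ∑ e ∈ cutEdges ends S, x e}

/-- A set `S` is `x`-tight if `x(δ_E(S)) = f(S)`. -/
def IsTight (k : ℤ) (I H : V → V → ℕ) (U : Finset V) (ends : E → V × V) (x : E → ℝ)
    (S : Finset V) : Prop :=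
  ∑ e ∈ cutEdges ends S, x e = (fRes k I H U S : ℝ)

/-- An `x`-core: an inclusion-minimal `f`-positive `x`-tight cut. -/
def IsCore (k : ℤ) (I H : V → V → ℕ) (U : Finset V) (ends : E → V × V) (x : E → ℝ)
    (C : Finset V) : Prop :=
  IsCut C ∧ 0 < fRes k I H U C ∧ IsTight k I H U ends x C ∧
    ∀ C' : Finset V, C' ⊂ C → IsCut C' → 0 < fRes k I H U C' →
      IsTight k I H U ends x C' → False

/-- The incidence vector `χ_{δ_E(S)} ∈ ℝ^E` of the cut edge set `δ_E(S)`. -/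
def chiCut (ends : E → V × V) (S : Finset V) : E → ℝ :=
  fun e => if e ∈ cutEdges ends S then 1 else 0

/-- A family of sets is laminar if any two members are either disjoint or nested. -/
def LaminarF {V : Type*} (F : Finset (Finset V)) : Prop :=
  ∀ A ∈ F, ∀ B ∈ F, Disjoint A B ∨ A ⊆ B ∨ B ⊆ A

/-- An `x`-defining family: a family `L` of `f`-positive `x`-tight cuts with `|L| = |E|`
whose incidence vectors `χ_{δ_E(S)}`, `S ∈ L`, are linearly independent. -/
def IsDefining (k : ℤ) (I H : V → V → ℕ) (U : Finset V) (ends : E → V × V) (x : E → ℝ)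
    (L : Finset (Finset V)) : Prop :=
  (∀ S ∈ L, IsCut S ∧ 0 < fRes k I H U S ∧ IsTight k I H U ends x S) ∧
  L.card = Fintype.card E ∧
  LinearIndependent ℝ (fun S : {A : Finset V // A ∈ L} => chiCut ends S.1)

set_option linter.unusedSectionVars false

/-- number of edge-endpoints lying in `S` -/
def endw (ends : E → V × V) (S : Finset V) : ℕ :=
  ∑ e : E, ((if (ends e).1 ∈ S then 1 else 0) + (if (ends e).2 ∈ S then 1 else 0))

lemma mem_cutEdges_iff {ends : E → V × V} {S : Finset V} {e : E} :
    e ∈ cutEdges ends S ↔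
      (((ends e).1 ∈ S ∧ (ends e).2 ∉ S) ∨ ((ends e).1 ∉ S ∧ (ends e).2 ∈ S)) := by
  simp [cutEdges]

lemma card_cutEdges_le_endw (ends : E → V × V) (S : Finset V) :
    (cutEdges ends S).card ≤ endw ends S := by
  rw [cutEdges, Finset.card_filter, endw]
  apply Finset.sum_le_sum
  intro e _
  by_cases h1 : (ends e).1 ∈ S <;> by_cases h2 : (ends e).2 ∈ S <;> simp [h1, h2]

lemma endw_eq_add_sdiff (ends : E → V × V) {R S : Finset V} (h : R ⊆ S) :
    endw ends S = endw ends R + endw ends (S \ R) := by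
  rw [endw, endw, endw, ← Finset.sum_add_distrib]
  apply Finset.sum_congr rfl
  intro e _
  have k1 : ∀ v : V, (if v ∈ S then (1:ℕ) else 0)
      = (if v ∈ R then 1 else 0) + (if v ∈ S \ R then 1 else 0) := by
    intro v
    by_cases hv : v ∈ R
    · simp [hv, h hv, Finset.mem_sdiff]
    · by_cases hv2 : v ∈ S <;> simp [hv, hv2, Finset.mem_sdiff]
  rw [k1, k1]
  ring

lemma sum_endw_le_endw (ends : E → V × V) (F : Finset (Finset V)) (S : Finset V)
    (hsub : ∀ A ∈ F, A ⊆ S)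
    (hdisj : ∀ A ∈ F, ∀ B ∈ F, A ≠ B → Disjoint A B) :
    ∑ A ∈ F, endw ends A ≤ endw ends S := by
  have key : ∀ v : V, (∑ A ∈ F, if v ∈ A then (1:ℕ) else 0) ≤ (if v ∈ S then 1 else 0) := by
    intro v
    rw [← Finset.card_filter]
    by_cases hv : ∃ A ∈ F, v ∈ A
    · obtain ⟨A, hA, hvA⟩ := hv
      have hvS : v ∈ S := hsub A hA hvA
      rw [if_pos hvS]
      apply Finset.card_le_one.mpr
      intro A1 h1 A2 h2
      rw [Finset.mem_filter] at h1 h2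
      by_contra hne
      exact Finset.disjoint_left.mp (hdisj A1 h1.1 A2 h2.1 hne) h1.2 h2.2
    · push_neg at hv
      have : F.filter (fun A => v ∈ A) = ∅ := by
        apply Finset.filter_eq_empty_iff.mpr
        intro A hA
        exact hv A hA
      rw [this]
      simp
  calc ∑ A ∈ F, endw ends A
      = ∑ e : E, ∑ A ∈ F,
          ((if (ends e).1 ∈ A then (1:ℕ) else 0) + (if (ends e).2 ∈ A then 1 else 0)) := by
        simp only [endw]
        rw [Finset.sum_comm]
    _ ≤ ∑ e : E, ((if (ends e).1 ∈ S then (1:ℕ) else 0) + (if (ends e).2 ∈ S then 1 else 0)) := by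
        apply Finset.sum_le_sum
        intro e _
        rw [Finset.sum_add_distrib]
        exact add_le_add (key _) (key _)
    _ = endw ends S := rfl

lemma endw_univ (ends : E → V × V) :
    endw ends (univ : Finset V) = 2 * Fintype.card E := by
  rw [endw]
  simp [Finset.sum_const, mul_comm]



lemma every_edge_crossed (k : ℤ) (I H : V → V → ℕ) (U : Finset V) (ends : E → V × V)
    [Nonempty E] (x : E → ℝ) (L : Finset (Finset V))
    (hLdef : IsDefining k I H U ends x L) (e : E) :
    ∃ S ∈ L, e ∈ cutEdges ends S := by
  by_contra hno
  push_neg at hno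
  have hLne : L.Nonempty := by
    rw [← Finset.card_pos, hLdef.2.1]
    exact Fintype.card_pos
  obtain ⟨S₁, hS₁⟩ := hLne
  haveI : Nonempty {A : Finset V // A ∈ L} := ⟨⟨S₁, hS₁⟩⟩
  have hcard : Fintype.card {A : Finset V // A ∈ L} = Module.finrank ℝ (E → ℝ) := by
    rw [Fintype.card_coe, hLdef.2.1, Module.finrank_fintype_fun_eq_card]
  let B := basisOfLinearIndependentOfCardEqFinrank hLdef.2.2 hcard
  have hB : ∀ i : {A : Finset V // A ∈ L}, B i = chiCut ends i.1 := by
    intro i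
    have := coe_basisOfLinearIndependentOfCardEqFinrank hLdef.2.2 hcard
    exact congrFun this i
  have hzero : (LinearMap.proj e : (E → ℝ) →ₗ[ℝ] ℝ) = 0 := by
    apply B.ext
    intro i
    rw [hB i]
    simp only [LinearMap.proj_apply, LinearMap.zero_apply, chiCut]
    rw [if_neg (hno i.1 i.2)]
  have h1 : (LinearMap.proj e : (E → ℝ) →ₗ[ℝ] ℝ) (fun _ => 1) = 1 := rfl
  rw [hzero] at h1
  simp at h1

lemma pcount_two (k : ℤ) (I H : V → V → ℕ) (U : Finset V) (ends : E → V × V)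
    (x : E → ℝ) (hxe : ∀ e, 0 < x e ∧ x e < 1) (L : Finset (Finset V))
    (hLdef : IsDefining k I H U ends x L) {S R : Finset V}
    (hS : S ∈ L) (hR : R ∈ L) (hRS : R ⊂ S) :
    2 ≤ endw ends (S \ R) := by
  by_contra hlt
  push_neg at hlt
  have hsub : R ⊆ S := hRS.subset
  have hmemv : ∀ v : V, v ∉ S \ R → (v ∈ S ↔ v ∈ R) := by
    intro v hv
    rw [Finset.mem_sdiff] at hv
    constructor
    · intro h; by_contra hc; exact hv ⟨h, hc⟩
    · intro h; exact hsub h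
  have hStight := (hLdef.1 S hS).2.2
  have hRtight := (hLdef.1 R hR).2.2
  have hinj : Function.Injective (fun S : {A : Finset V // A ∈ L} => chiCut ends S.1) :=
    hLdef.2.2.injective
  set s : E → ℕ := fun e =>
    (if (ends e).1 ∈ S \ R then 1 else 0) + (if (ends e).2 ∈ S \ R then 1 else 0) with hs
  have hps : endw ends (S \ R) = ∑ e : E, s e := rfl
  by_cases hex : ∃ e, s e ≠ 0
  · -- exactly one endpoint slot in S \ R
    obtain ⟨e0, he0⟩ := hex
    have h1 : 1 ≤ s e0 := Nat.one_le_iff_ne_zero.mpr he0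
    have hse0le : s e0 ≤ endw ends (S \ R) := by
      rw [hps]
      exact Finset.single_le_sum (fun i _ => Nat.zero_le _) (Finset.mem_univ e0)
    have hothers : ∀ e, e ≠ e0 → s e = 0 := by
      intro e hne
      by_contra hc
      have h1' : 1 ≤ s e := Nat.one_le_iff_ne_zero.mpr hc
      have hpair : s e + s e0 ≤ ∑ e' : E, s e' := by
        rw [← Finset.sum_pair hne]
        exact Finset.sum_le_sum_of_subset (Finset.subset_univ _)
      rw [← hps] at hpair
      omega
    have hse0 : s e0 = 1 := by omega
    have hcutiff : ∀ e, e ≠ e0 → (e ∈ cutEdges ends S ↔ e ∈ cutEdges ends R) := by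
      intro e hne
      have hs0 := hothers e hne
      have ha : (ends e).1 ∉ S \ R := by
        by_contra hc
        rw [hs] at hs0
        simp only [hc, if_pos] at hs0
        omega
      have hb : (ends e).2 ∉ S \ R := by
        by_contra hc
        rw [hs] at hs0
        simp only [hc, if_pos] at hs0
        omega
      have h1' := hmemv _ ha
      have h2' := hmemv _ hb
      rw [mem_cutEdges_iff, mem_cutEdges_iff]
      tauto
    have hsum : ((fRes k I H U S : ℝ) - (fRes k I H U R : ℝ))
        = ∑ e : E, ((if e ∈ cutEdges ends S then x e else 0)
            - (if e ∈ cutEdges ends R then x e else 0)) := by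
      rw [← hStight, ← hRtight, Finset.sum_sub_distrib]
      congr 1 <;> rw [Finset.sum_ite_mem, Finset.univ_inter]
    have hsingle : ∑ e : E, ((if e ∈ cutEdges ends S then x e else 0)
            - (if e ∈ cutEdges ends R then x e else 0))
        = (if e0 ∈ cutEdges ends S then x e0 else 0)
            - (if e0 ∈ cutEdges ends R then x e0 else 0) := by
      apply Finset.sum_eq_single
      · intro e _ hne
        by_cases hc : e ∈ cutEdges ends S
        · rw [if_pos hc, if_pos ((hcutiff e hne).mp hc)]; ring
        · rw [if_neg hc, if_neg (fun hc2 => hc ((hcutiff e hne).mpr hc2))]; ring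
      · intro h; exact absurd (Finset.mem_univ e0) h
    set d : ℤ := fRes k I H U S - fRes k I H U R with hd
    have hdr : (d : ℝ) = (if e0 ∈ cutEdges ends S then x e0 else 0)
            - (if e0 ∈ cutEdges ends R then x e0 else 0) := by
      rw [hd]
      push_cast
      rw [hsum, hsingle]
    have hx0 := hxe e0
    -- determine which endpoint is in S \ R
    by_cases hu : (ends e0).1 ∈ S \ R <;> by_cases hv : (ends e0).2 ∈ S \ R
    · rw [hs] at hse0; simp only [hu, hv, if_pos] at hse0; omega
    · -- first endpoint in S \ R
      have huS : (ends e0).1 ∈ S := (Finset.mem_sdiff.mp hu).1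
      have huR : (ends e0).1 ∉ R := (Finset.mem_sdiff.mp hu).2
      have hviff := hmemv _ hv
      by_cases hvS : (ends e0).2 ∈ S
      · have hvR : (ends e0).2 ∈ R := hviff.mp hvS
        have hc1 : e0 ∉ cutEdges ends S := by
          rw [mem_cutEdges_iff]; push_neg
          constructor
          · intro _; exact hvS
          · intro hcon; exact absurd huS hcon
        have hc2 : e0 ∈ cutEdges ends R := mem_cutEdges_iff.mpr (Or.inr ⟨huR, hvR⟩)
        rw [if_neg hc1, if_pos hc2] at hdr
        have hd1 : (d : ℝ) < 0 := by rw [hdr]; linarith [hx0.1]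
        have hd2 : (-1 : ℝ) < (d : ℝ) := by rw [hdr]; linarith [hx0.2]
        have hd1' : d < 0 := by exact_mod_cast hd1
        have hd2' : (-1 : ℤ) < d := by exact_mod_cast hd2
        omega
      · have hvR : (ends e0).2 ∉ R := fun hc => hvS (hsub hc)
        have hc1 : e0 ∈ cutEdges ends S := mem_cutEdges_iff.mpr (Or.inl ⟨huS, hvS⟩)
        have hc2 : e0 ∉ cutEdges ends R := by
          rw [mem_cutEdges_iff]; push_neg
          constructor
          · intro hcon; exact absurd hcon huR
          · intro _; exact hvR
        rw [if_pos hc1, if_neg hc2] at hdr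
        have hd1 : (0 : ℝ) < (d : ℝ) := by rw [hdr]; linarith [hx0.1]
        have hd2 : (d : ℝ) < 1 := by rw [hdr]; linarith [hx0.2]
        have hd1' : (0 : ℤ) < d := by exact_mod_cast hd1
        have hd2' : d < 1 := by exact_mod_cast hd2
        omega
    · -- second endpoint in S \ R (symmetric)
      have hvS : (ends e0).2 ∈ S := (Finset.mem_sdiff.mp hv).1
      have hvR : (ends e0).2 ∉ R := (Finset.mem_sdiff.mp hv).2
      have huiff := hmemv _ hu
      by_cases huS : (ends e0).1 ∈ S
      · have huR : (ends e0).1 ∈ R := huiff.mp huS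
        have hc1 : e0 ∉ cutEdges ends S := by
          rw [mem_cutEdges_iff]; push_neg
          constructor
          · intro _; exact hvS
          · intro hcon; exact absurd huS hcon
        have hc2 : e0 ∈ cutEdges ends R := mem_cutEdges_iff.mpr (Or.inl ⟨huR, hvR⟩)
        rw [if_neg hc1, if_pos hc2] at hdr
        have hd1 : (d : ℝ) < 0 := by rw [hdr]; linarith [hx0.1]
        have hd2 : (-1 : ℝ) < (d : ℝ) := by rw [hdr]; linarith [hx0.2]
        have hd1' : d < 0 := by exact_mod_cast hd1
        have hd2' : (-1 : ℤ) < d := by exact_mod_cast hd2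
        omega
      · have huR : (ends e0).1 ∉ R := fun hc => huS (hsub hc)
        have hc1 : e0 ∈ cutEdges ends S := mem_cutEdges_iff.mpr (Or.inr ⟨huS, hvS⟩)
        have hc2 : e0 ∉ cutEdges ends R := by
          rw [mem_cutEdges_iff]; push_neg
          constructor
          · intro hcon; exact absurd hcon huR
          · intro _; exact hvR
        rw [if_pos hc1, if_neg hc2] at hdr
        have hd1 : (0 : ℝ) < (d : ℝ) := by rw [hdr]; linarith [hx0.1]
        have hd2 : (d : ℝ) < 1 := by rw [hdr]; linarith [hx0.2]
        have hd1' : (0 : ℤ) < d := by exact_mod_cast hd1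
        have hd2' : d < 1 := by exact_mod_cast hd2
        omega
    · rw [hs] at hse0
      simp only [hu, hv, if_neg, if_neg] at hse0
      omega
  · -- no endpoint slot: cuts coincide, contradicting independence
    push_neg at hex
    have hcuts : cutEdges ends S = cutEdges ends R := by
      ext e
      have hs0 := hex e
      have ha : (ends e).1 ∉ S \ R := by
        by_contra hc
        rw [hs] at hs0
        simp only [hc, if_pos] at hs0
        omega
      have hb : (ends e).2 ∉ S \ R := by
        by_contra hc
        rw [hs] at hs0
        simp only [hc, if_pos] at hs0
        omega
      have h1' := hmemv _ ha
      have h2' := hmemv _ hb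
      rw [mem_cutEdges_iff, mem_cutEdges_iff]
      tauto
    have hchi : chiCut ends S = chiCut ends R := by
      funext e
      simp only [chiCut, hcuts]
    have : (⟨S, hS⟩ : {A : Finset V // A ∈ L}) = ⟨R, hR⟩ := hinj hchi
    have : S = R := congrArg Subtype.val this
    exact hRS.ne' this




lemma exists_max_sup {F : Finset (Finset V)} {T : Finset V} (hT : T ∈ F) :
    ∃ R1, R1 ∈ F ∧ T ⊆ R1 ∧ ∀ B ∈ F, ¬ R1 ⊂ B := by
  obtain ⟨R1, hR1, hmax⟩ := Finset.exists_max_image (F.filter (fun B => T ⊆ B)) Finset.card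
    ⟨T, Finset.mem_filter.mpr ⟨hT, subset_rfl⟩⟩
  rw [Finset.mem_filter] at hR1
  refine ⟨R1, hR1.1, hR1.2, fun B hB hss => ?_⟩
  have hTB : T ⊆ B := hR1.2.trans hss.subset
  have h1 := hmax B (Finset.mem_filter.mpr ⟨hB, hTB⟩)
  have h2 := Finset.card_lt_card hss
  omega

lemma subtree_bound (k : ℤ) (I H : V → V → ℕ) (U : Finset V) (ends : E → V × V)
    (x : E → ℝ) (hxe : ∀ e, 0 < x e ∧ x e < 1) (L : Finset (Finset V))
    (hLlam : LaminarF L) (hLdef : IsDefining k I H U ends x L)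
    (Hmin : ∀ S ∈ L, (∀ B ∈ L, ¬ B ⊂ S) → 4 ≤ (cutEdges ends S).card) :
    ∀ n : ℕ, ∀ S ∈ L, S.card ≤ n →
      2 * (L.filter (· ⊆ S)).card + 2 ≤ endw ends S := by
  intro n
  induction n with
  | zero =>
    intro S hS hcard
    have h1 : S.Nonempty := ((hLdef.1 S hS).1).1
    have := Finset.Nonempty.card_pos h1
    omega
  | succ n ih =>
    intro S hS hcard
    by_cases hmin : ∀ B ∈ L, ¬ B ⊂ S
    · have h4 := Hmin S hS hmin
      have hfe : L.filter (· ⊆ S) = {S} := by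
        ext B
        rw [Finset.mem_filter, Finset.mem_singleton]
        constructor
        · rintro ⟨hBL, hBS⟩
          by_contra hne
          exact hmin B hBL (HasSubset.Subset.ssubset_of_ne hBS hne)
        · rintro rfl
          exact ⟨hS, subset_rfl⟩
      rw [hfe, Finset.card_singleton]
      have := card_cutEdges_le_endw ends S
      omega
    · push_neg at hmin
      set C := L.filter (fun B => B ⊂ S) with hCdef
      have hCne : C.Nonempty := by
        obtain ⟨B, hBL, hBS⟩ := hmin
        exact ⟨B, Finset.mem_filter.mpr ⟨hBL, hBS⟩⟩
      set Rt := C.filter (fun B => ∀ B' ∈ C, ¬ B ⊂ B') with hRtdef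
      have hcover : ∀ T ∈ C, ∃ R1 ∈ Rt, T ⊆ R1 := by
        intro T hT
        obtain ⟨R1, hR1, hTR1, hmax⟩ := exists_max_sup hT
        exact ⟨R1, Finset.mem_filter.mpr ⟨hR1, hmax⟩, hTR1⟩
      have hRtC : ∀ A ∈ Rt, A ∈ C := fun A hA => (Finset.mem_filter.mp hA).1
      have hRtL : ∀ A ∈ Rt, A ∈ L := fun A hA => (Finset.mem_filter.mp (hRtC A hA)).1
      have hRtS : ∀ A ∈ Rt, A ⊂ S := fun A hA => (Finset.mem_filter.mp (hRtC A hA)).2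
      have hRtdisj : ∀ A ∈ Rt, ∀ B ∈ Rt, A ≠ B → Disjoint A B := by
        intro A hA B hB hne
        rcases hLlam A (hRtL A hA) B (hRtL B hB) with h | h | h
        · exact h
        · exact absurd (HasSubset.Subset.ssubset_of_ne h hne)
            ((Finset.mem_filter.mp hA).2 B (hRtC B hB))
        · exact absurd (HasSubset.Subset.ssubset_of_ne h hne.symm)
            ((Finset.mem_filter.mp hB).2 A (hRtC A hA))
      have hRtne : Rt.Nonempty := by
        obtain ⟨T, hT⟩ := hCne
        obtain ⟨R1, hR1, _⟩ := hcover T hT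
        exact ⟨R1, hR1⟩
      have hkey : L.filter (· ⊆ S) = insert S (Rt.biUnion (fun R1 => L.filter (· ⊆ R1))) := by
        ext B
        simp only [Finset.mem_filter, Finset.mem_insert, Finset.mem_biUnion]
        constructor
        · rintro ⟨hBL, hBS⟩
          by_cases hBeq : B = S
          · left; exact hBeq
          · right
            obtain ⟨R1, hR1, hsub⟩ := hcover B
              (Finset.mem_filter.mpr ⟨hBL, HasSubset.Subset.ssubset_of_ne hBS hBeq⟩)
            exact ⟨R1, hR1, hBL, hsub⟩
        · rintro (rfl | ⟨R1, hR1, hBL, hsub⟩)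
          · exact ⟨hS, subset_rfl⟩
          · exact ⟨hBL, hsub.trans (hRtS R1 hR1).subset⟩
      have hSnot : S ∉ Rt.biUnion (fun R1 => L.filter (· ⊆ R1)) := by
        simp only [Finset.mem_biUnion, Finset.mem_filter]
        rintro ⟨R1, hR1, _, hsub⟩
        exact (hRtS R1 hR1).not_subset hsub
      have hdisjfilters : ∀ A ∈ Rt, ∀ B ∈ Rt, A ≠ B →
          Disjoint (L.filter (· ⊆ A)) (L.filter (· ⊆ B)) := by
        intro A hA B hB hne
        rw [Finset.disjoint_left]
        intro T hTA hTB
        have hT1 := Finset.mem_filter.mp hTA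
        have hT2 := Finset.mem_filter.mp hTB
        obtain ⟨t, ht⟩ := ((hLdef.1 T hT1.1).1).1
        exact Finset.disjoint_left.mp (hRtdisj A hA B hB hne) (hT1.2 ht) (hT2.2 ht)
      have hcards : (L.filter (· ⊆ S)).card
          = (∑ R1 ∈ Rt, (L.filter (· ⊆ R1)).card) + 1 := by
        rw [hkey, Finset.card_insert_of_notMem hSnot, Finset.card_biUnion hdisjfilters]
      have hIH : ∀ R1 ∈ Rt, 2 * (L.filter (· ⊆ R1)).card + 2 ≤ endw ends R1 := by
        intro R1 hR1
        apply ih R1 (hRtL R1 hR1)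
        have := Finset.card_lt_card (hRtS R1 hR1)
        omega
      by_cases hone : Rt.card = 1
      · obtain ⟨R1, hR1eq⟩ := Finset.card_eq_one.mp hone
        have hR1mem : R1 ∈ Rt := by rw [hR1eq]; exact Finset.mem_singleton_self R1
        have hp := pcount_two k I H U ends x hxe L hLdef hS (hRtL R1 hR1mem) (hRtS R1 hR1mem)
        have hsplit := endw_eq_add_sdiff ends (hRtS R1 hR1mem).subset
        have hsum : ∑ R' ∈ Rt, (L.filter (· ⊆ R')).card = (L.filter (· ⊆ R1)).card := by
          rw [hR1eq, Finset.sum_singleton]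
        have := hIH R1 hR1mem
        omega
      · have htwo : 2 ≤ Rt.card := by
          have := Finset.Nonempty.card_pos hRtne
          omega
        have hsumle := sum_endw_le_endw ends Rt S (fun A hA => (hRtS A hA).subset) hRtdisj
        have hsum2 : ∑ R1 ∈ Rt, (2 * (L.filter (· ⊆ R1)).card + 2)
            ≤ ∑ R1 ∈ Rt, endw ends R1 := Finset.sum_le_sum hIH
        have hsum3 : ∑ R1 ∈ Rt, (2 * (L.filter (· ⊆ R1)).card + 2)
            = 2 * (∑ R1 ∈ Rt, (L.filter (· ⊆ R1)).card) + 2 * Rt.card := by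
          rw [Finset.sum_add_distrib, Finset.mul_sum, Finset.sum_const, smul_eq_mul,
            mul_comm]
        omega

lemma counting_false (k : ℤ) (I H : V → V → ℕ) (U : Finset V) (ends : E → V × V)
    [Nonempty E] (x : E → ℝ) (hxe : ∀ e, 0 < x e ∧ x e < 1) (L : Finset (Finset V))
    (hLlam : LaminarF L) (hLdef : IsDefining k I H U ends x L)
    (Hmin : ∀ S ∈ L, (∀ B ∈ L, ¬ B ⊂ S) → 4 ≤ (cutEdges ends S).card) : False := by
  set Rt := L.filter (fun B => ∀ B' ∈ L, ¬ B ⊂ B') with hRtdef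
  have hLne : L.Nonempty := by
    rw [← Finset.card_pos, hLdef.2.1]
    exact Fintype.card_pos
  have hcover : ∀ T ∈ L, ∃ R1 ∈ Rt, T ⊆ R1 := by
    intro T hT
    obtain ⟨R1, hR1, hTR1, hmax⟩ := exists_max_sup hT
    exact ⟨R1, Finset.mem_filter.mpr ⟨hR1, hmax⟩, hTR1⟩
  have hRtL : ∀ A ∈ Rt, A ∈ L := fun A hA => (Finset.mem_filter.mp hA).1
  have hRtdisj : ∀ A ∈ Rt, ∀ B ∈ Rt, A ≠ B → Disjoint A B := by
    intro A hA B hB hne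
    rcases hLlam A (hRtL A hA) B (hRtL B hB) with h | h | h
    · exact h
    · exact absurd (HasSubset.Subset.ssubset_of_ne h hne)
        ((Finset.mem_filter.mp hA).2 B (hRtL B hB))
    · exact absurd (HasSubset.Subset.ssubset_of_ne h hne.symm)
        ((Finset.mem_filter.mp hB).2 A (hRtL A hA))
  have hRtne : Rt.Nonempty := by
    obtain ⟨T, hT⟩ := hLne
    obtain ⟨R1, hR1, _⟩ := hcover T hT
    exact ⟨R1, hR1⟩
  have hsubU : L ⊆ Rt.biUnion (fun R1 => L.filter (· ⊆ R1)) := by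
    intro T hT
    obtain ⟨R1, hR1, hTR1⟩ := hcover T hT
    exact Finset.mem_biUnion.mpr ⟨R1, hR1, Finset.mem_filter.mpr ⟨hT, hTR1⟩⟩
  have hcard1 : L.card ≤ ∑ R1 ∈ Rt, (L.filter (· ⊆ R1)).card :=
    (Finset.card_le_card hsubU).trans Finset.card_biUnion_le
  have hIH : ∀ R1 ∈ Rt, 2 * (L.filter (· ⊆ R1)).card + 2 ≤ endw ends R1 := by
    intro R1 hR1
    exact subtree_bound k I H U ends x hxe L hLlam hLdef Hmin R1.card R1 (hRtL R1 hR1) le_rfl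
  have hsumle := sum_endw_le_endw ends Rt univ (fun A _ => Finset.subset_univ A) hRtdisj
  have huniv := endw_univ ends (V := V)
  have hsum2 : ∑ R1 ∈ Rt, (2 * (L.filter (· ⊆ R1)).card + 2)
      ≤ ∑ R1 ∈ Rt, endw ends R1 := Finset.sum_le_sum hIH
  have hsum3 : ∑ R1 ∈ Rt, (2 * (L.filter (· ⊆ R1)).card + 2)
      = 2 * (∑ R1 ∈ Rt, (L.filter (· ⊆ R1)).card) + 2 * Rt.card := by
    rw [Finset.sum_add_distrib, Finset.mul_sum, Finset.sum_const, smul_eq_mul, mul_comm]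
  have hLE : L.card = Fintype.card E := hLdef.2.1
  have hRt1 := Finset.Nonempty.card_pos hRtne
  omega

lemma exists_core_subset (k : ℤ) (I H : V → V → ℕ) (U : Finset V) (ends : E → V × V)
    (x : E → ℝ) :
    ∀ n : ℕ, ∀ S : Finset V, S.card ≤ n → IsCut S → 0 < fRes k I H U S →
      IsTight k I H U ends x S →
      ∃ C, C ⊆ S ∧ IsCore k I H U ends x C := by
  intro n
  induction n with
  | zero =>
    intro S hc hcut _ _
    have := Finset.Nonempty.card_pos hcut.1
    omega
  | succ n ih =>
    intro S hc hcut hpos htight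
    by_cases h : ∃ C', C' ⊂ S ∧ IsCut C' ∧ 0 < fRes k I H U C' ∧ IsTight k I H U ends x C'
    · obtain ⟨C', hss, h1, h2, h3⟩ := h
      have := Finset.card_lt_card hss
      obtain ⟨C, hCsub, hCore⟩ := ih C' (by omega) h1 h2 h3
      exact ⟨C, hCsub.trans hss.subset, hCore⟩
    · exact ⟨S, subset_rfl, hcut, hpos, htight,
        fun C' hss h1 h2 h3 => h ⟨C', hss, h1, h2, h3⟩⟩


/-- Lemma 4.1 (from HKZ): if there exists a laminar `x`-defining family, then there is an
`x`-core `C` with `d_E(C) ∈ {2,3}` and `f(C) ∈ {1,2}`, and no edge of `E` has both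
endpoints in `C`. -/
theorem laminar_defining_family_gives_core
    (k : ℤ) (I H : V → V → ℕ)
    (hIsymm : ∀ a b, I a b = I b a) (hHsymm : ∀ a b, H a b = H b a)
    (U : Finset V) (ends : E → V × V) [Nonempty E]
    (x : E → ℝ) (hxP : x ∈ polyP k I H U ends)
    (hxe : ∀ e, 0 < x e ∧ x e < 1)
    (L : Finset (Finset V)) (hLlam : LaminarF L)
    (hLdef : IsDefining k I H U ends x L) :
    ∃ C : Finset V, IsCore k I H U ends x C ∧
      ((cutEdges ends C).card = 2 ∨ (cutEdges ends C).card = 3) ∧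
      (fRes k I H U C = 1 ∨ fRes k I H U C = 2) ∧
      ∀ e : E, ¬((ends e).1 ∈ C ∧ (ends e).2 ∈ C) := by
  classical
  -- Step 1: find a minimal member S0 of L with at most 3 cut edges
  have hexS0 : ∃ S0, S0 ∈ L ∧ (∀ B ∈ L, ¬ B ⊂ S0) ∧ (cutEdges ends S0).card ≤ 3 := by
    by_contra hno
    push_neg at hno
    exact counting_false k I H U ends x hxe L hLlam hLdef
      (fun S hS hmin => by have := hno S hS hmin; omega)
  obtain ⟨S0, hS0L, hS0min, hS0card⟩ := hexS0
  obtain ⟨hS0cut, hS0pos, hS0tight⟩ := hLdef.1 S0 hS0L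
  -- Step 2: no edge has both endpoints in S0
  have hno_inside : ∀ e : E, ¬((ends e).1 ∈ S0 ∧ (ends e).2 ∈ S0) := by
    rintro e ⟨hu, hv⟩
    obtain ⟨T, hT, heT⟩ := every_edge_crossed k I H U ends x L hLdef e
    rw [mem_cutEdges_iff] at heT
    rcases hLlam S0 hS0L T hT with hd | hsub | hsub
    · have h1 := Finset.disjoint_left.mp hd hu
      have h2 := Finset.disjoint_left.mp hd hv
      tauto
    · have h1 := hsub hu
      have h2 := hsub hv
      tauto
    · by_cases hTeq : T = S0
      · subst hTeq; tauto
      · exact hS0min T hT (HasSubset.Subset.ssubset_of_ne hsub hTeq)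
  -- Step 3: take a core inside S0
  obtain ⟨C, hCS0, hCore⟩ :=
    exists_core_subset k I H U ends x S0.card S0 le_rfl hS0cut hS0pos hS0tight
  obtain ⟨hCcut, hCpos, hCtight, hCmin⟩ := hCore
  have hnoC : ∀ e : E, ¬((ends e).1 ∈ C ∧ (ends e).2 ∈ C) :=
    fun e ⟨hu, hv⟩ => hno_inside e ⟨hCS0 hu, hCS0 hv⟩
  -- Step 4: δ(C) ⊆ δ(S0)
  have hdel : cutEdges ends C ⊆ cutEdges ends S0 := by
    intro e he
    rw [mem_cutEdges_iff] at he ⊢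
    rcases he with ⟨h1, h2⟩ | ⟨h1, h2⟩
    · have hu : (ends e).1 ∈ S0 := hCS0 h1
      have hv : (ends e).2 ∉ S0 := fun hv => hno_inside e ⟨hu, hv⟩
      exact Or.inl ⟨hu, hv⟩
    · have hv : (ends e).2 ∈ S0 := hCS0 h2
      have hu : (ends e).1 ∉ S0 := fun hu => hno_inside e ⟨hu, hv⟩
      exact Or.inr ⟨hu, hv⟩
  have hcard3 : (cutEdges ends C).card ≤ 3 := (Finset.card_le_card hdel).trans hS0card
  -- Step 5: numeric bounds
  have hxsum : ∑ e ∈ cutEdges ends C, x e = (fRes k I H U C : ℝ) := hCtight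
  have hge1 : (1 : ℝ) ≤ ∑ e ∈ cutEdges ends C, x e := by
    rw [hxsum]
    exact_mod_cast hCpos
  have hne : (cutEdges ends C).Nonempty := by
    by_contra h
    rw [Finset.not_nonempty_iff_eq_empty] at h
    rw [h, Finset.sum_empty] at hge1
    linarith
  have hlt : ∑ e ∈ cutEdges ends C, x e < ((cutEdges ends C).card : ℝ) := by
    have h1 : ∑ e ∈ cutEdges ends C, x e < ∑ _e ∈ cutEdges ends C, (1 : ℝ) :=
      Finset.sum_lt_sum_of_nonempty hne (fun e _ => (hxe e).2)
    rw [Finset.sum_const, nsmul_eq_mul, mul_one] at h1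
    exact h1
  have hcard2 : 2 ≤ (cutEdges ends C).card := by
    have h1 : (1 : ℝ) < ((cutEdges ends C).card : ℝ) := lt_of_le_of_lt hge1 hlt
    have h2 : 1 < (cutEdges ends C).card := by exact_mod_cast h1
    omega
  have hf3 : (fRes k I H U C : ℝ) < 3 := by
    rw [← hxsum]
    have : ((cutEdges ends C).card : ℝ) ≤ 3 := by exact_mod_cast hcard3
    linarith
  have hfle : fRes k I H U C ≤ 2 := by
    have : fRes k I H U C < 3 := by exact_mod_cast hf3
    omega
  refine ⟨C, ⟨hCcut, hCpos, hCtight, hCmin⟩, by omega, by omega, hnoC⟩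
end

section
/- Let k be an integer, I and H multigraphs on the finite set V, U ⊆ V, and let f, P, μ = ⌈(k−3)/2⌉ be as defined. Assume d_H(u) ≤ 1 and d_I(u) + 2·d_H(u) ≥ k − 2 for every u ∈ U, and d_I(u,v) ≥ μ for all u, v ∈ V with d_H(u,v) ≥ 1. Let x be an extreme point of P with 0 < x_e < 1 for every e ∈ E, where E ≠ ∅, and suppose that no laminar x-defining family exists. Then there are distinct u, v ∈ U with d_I(u,v) ≥ μ and d_H(u,v) = 0. -/
open Finset

variable {V : Type*} [Fintype V] [DecidableEq V] {E : Type*} [Fintype E] [DecidableEq E]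

set_option linter.unusedSectionVars false
set_option maxHeartbeats 2000000

namespace GhostAux

/-! ### Counting lemmas for `dBetween` and `degS` -/

theorem dB_comm {m : V → V → ℕ} (hm : ∀ a b, m a b = m b a) (A B : Finset V) :
    dBetween m A B = dBetween m B A := by
  unfold dBetween
  rw [Finset.sum_comm]
  exact Finset.sum_congr rfl fun u _ => Finset.sum_congr rfl fun v _ => hm v u

theorem dB_union_left {m : V → V → ℕ} {A B : Finset V} (C : Finset V) (h : Disjoint A B) :
    dBetween m (A ∪ B) C = dBetween m A C + dBetween m B C := by
  unfold dBetween; exact Finset.sum_union h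

theorem dB_union_right {m : V → V → ℕ} (A : Finset V) {B C : Finset V} (h : Disjoint B C) :
    dBetween m A (B ∪ C) = dBetween m A B + dBetween m A C := by
  unfold dBetween
  rw [← Finset.sum_add_distrib]
  exact Finset.sum_congr rfl fun u _ => Finset.sum_union h

theorem dB_singleton (m : V → V → ℕ) (a b : V) : dBetween m {a} {b} = m a b := by
  simp [dBetween]

theorem degS_two (I H : V → V → ℕ) (S : Finset V) :
    degS (fun a b => I a b + 2 * H a b) S = degS I S + 2 * degS H S := by
  unfold degS dBetween
  rw [Finset.mul_sum, ← Finset.sum_add_distrib]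
  refine Finset.sum_congr rfl fun u _ => ?_
  rw [Finset.mul_sum, ← Finset.sum_add_distrib]

theorem degS_compl {m : V → V → ℕ} (hm : ∀ a b, m a b = m b a) (S : Finset V) :
    degS m Sᶜ = degS m S := by
  unfold degS
  rw [compl_compl, dB_comm hm]

section Regions
variable (S R : Finset V)

theorem d12 : Disjoint (S ∩ R) (S \ R) := by
  rw [Finset.disjoint_left]; intro a h1 h2; simp_all
theorem d13 : Disjoint (S ∩ R) (R \ S) := by
  rw [Finset.disjoint_left]; intro a h1 h2; simp_all
theorem d14 : Disjoint (S ∩ R) (S ∪ R)ᶜ := by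
  rw [Finset.disjoint_left]; intro a h1 h2; simp_all
theorem d23 : Disjoint (S \ R) (R \ S) := by
  rw [Finset.disjoint_left]; intro a h1 h2; simp_all
theorem d24 : Disjoint (S \ R) (S ∪ R)ᶜ := by
  rw [Finset.disjoint_left]; intro a h1 h2; simp_all
theorem d34 : Disjoint (R \ S) (S ∪ R)ᶜ := by
  rw [Finset.disjoint_left]; intro a h1 h2; simp_all

theorem eqS : S = (S ∩ R) ∪ (S \ R) := by ext a; by_cases h : a ∈ R <;> simp [h]
theorem eqR : R = (S ∩ R) ∪ (R \ S) := by ext a; by_cases h : a ∈ S <;> simp [h]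
theorem eqSc : Sᶜ = (R \ S) ∪ (S ∪ R)ᶜ := by
  ext a; by_cases h : a ∈ R <;> by_cases h2 : a ∈ S <;> simp [h, h2]
theorem eqRc : Rᶜ = (S \ R) ∪ (S ∪ R)ᶜ := by
  ext a; by_cases h : a ∈ R <;> by_cases h2 : a ∈ S <;> simp [h, h2]
theorem eqIc : (S ∩ R)ᶜ = (S \ R) ∪ ((R \ S) ∪ (S ∪ R)ᶜ) := by
  ext a; by_cases h : a ∈ R <;> by_cases h2 : a ∈ S <;> simp [h, h2]
theorem eqU : S ∪ R = (S ∩ R) ∪ ((S \ R) ∪ (R \ S)) := by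
  ext a; by_cases h : a ∈ R <;> by_cases h2 : a ∈ S <;> simp [h, h2]
theorem eqDc : (S \ R)ᶜ = (S ∩ R) ∪ ((R \ S) ∪ (S ∪ R)ᶜ) := by
  ext a; by_cases h : a ∈ R <;> by_cases h2 : a ∈ S <;> simp [h, h2]

variable {m : V → V → ℕ} (hm : ∀ a b, m a b = m b a)

include hm

theorem sigma_S : degS m S =
    dBetween m (S ∩ R) (R \ S) + dBetween m (S ∩ R) (S ∪ R)ᶜ +
      (dBetween m (S \ R) (R \ S) + dBetween m (S \ R) (S ∪ R)ᶜ) := by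
  have key : degS m S = dBetween m ((S ∩ R) ∪ (S \ R)) ((R \ S) ∪ (S ∪ R)ᶜ) := by
    unfold degS; rw [← eqS S R, ← eqSc S R]
  rw [key, dB_union_left _ (d12 S R), dB_union_right _ (d34 S R), dB_union_right _ (d34 S R)]

theorem sigma_R : degS m R =
    dBetween m (S ∩ R) (S \ R) + dBetween m (S ∩ R) (S ∪ R)ᶜ +
      (dBetween m (S \ R) (R \ S) + dBetween m (R \ S) (S ∪ R)ᶜ) := by
  have key : degS m R = dBetween m ((S ∩ R) ∪ (R \ S)) ((S \ R) ∪ (S ∪ R)ᶜ) := by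
    unfold degS; rw [← eqR S R, ← eqRc S R]
  rw [key, dB_union_left _ (d13 S R), dB_union_right _ (d24 S R), dB_union_right _ (d24 S R),
    dB_comm hm (R \ S) (S \ R)]

theorem sigma_inter : degS m (S ∩ R) =
    dBetween m (S ∩ R) (S \ R) +
      (dBetween m (S ∩ R) (R \ S) + dBetween m (S ∩ R) (S ∪ R)ᶜ) := by
  have key : degS m (S ∩ R) = dBetween m (S ∩ R) ((S \ R) ∪ ((R \ S) ∪ (S ∪ R)ᶜ)) := by
    unfold degS; rw [← eqIc S R]
  rw [key, dB_union_right _ (Finset.disjoint_union_right.mpr ⟨d23 S R, d24 S R⟩),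
    dB_union_right _ (d34 S R)]

theorem sigma_union : degS m (S ∪ R) =
    dBetween m (S ∩ R) (S ∪ R)ᶜ +
      (dBetween m (S \ R) (S ∪ R)ᶜ + dBetween m (R \ S) (S ∪ R)ᶜ) := by
  have key : degS m (S ∪ R) = dBetween m ((S ∩ R) ∪ ((S \ R) ∪ (R \ S))) (S ∪ R)ᶜ := by
    unfold degS; rw [← eqU S R]
  rw [key, dB_union_left _ (Finset.disjoint_union_right.mpr ⟨d12 S R, d13 S R⟩),
    dB_union_left _ (d23 S R)]

theorem sigma_sdiff : degS m (S \ R) =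
    dBetween m (S ∩ R) (S \ R) +
      (dBetween m (S \ R) (R \ S) + dBetween m (S \ R) (S ∪ R)ᶜ) := by
  have key : degS m (S \ R) = dBetween m (S \ R) ((S ∩ R) ∪ ((R \ S) ∪ (S ∪ R)ᶜ)) := by
    unfold degS; rw [← eqDc S R]
  rw [key, dB_union_right _ (Finset.disjoint_union_right.mpr ⟨d13 S R, d14 S R⟩),
    dB_union_right _ (d34 S R), dB_comm hm (S \ R) (S ∩ R)]

end Regions

/-! ### Edge-side lemmas -/

def betweenEdges (ends : E → V × V) (A B : Finset V) : Finset E :=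
  univ.filter fun e => ((ends e).1 ∈ A ∧ (ends e).2 ∈ B) ∨ ((ends e).1 ∈ B ∧ (ends e).2 ∈ A)

theorem mem_cutEdges {ends : E → V × V} {S : Finset V} {e : E} :
    e ∈ cutEdges ends S ↔
      (((ends e).1 ∈ S ∧ (ends e).2 ∉ S) ∨ ((ends e).1 ∉ S ∧ (ends e).2 ∈ S)) := by
  simp [cutEdges]

theorem cutEdges_compl {ends : E → V × V} (S : Finset V) :
    cutEdges ends Sᶜ = cutEdges ends S := by
  ext e; simp only [mem_cutEdges, Finset.mem_compl]; tauto

theorem ind_identity (ends : E → V × V) (S R : Finset V) (e : E) :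
    (if e ∈ cutEdges ends S then (1:ℝ) else 0) + (if e ∈ cutEdges ends R then (1:ℝ) else 0) =
      (if e ∈ cutEdges ends (S ∪ R) then (1:ℝ) else 0) +
      (if e ∈ cutEdges ends (S ∩ R) then (1:ℝ) else 0) +
      2 * (if e ∈ betweenEdges ends (S \ R) (R \ S) then (1:ℝ) else 0) := by
  simp only [mem_cutEdges, betweenEdges, Finset.mem_filter, Finset.mem_univ, true_and,
    Finset.mem_union, Finset.mem_inter, Finset.mem_sdiff]
  by_cases h1 : (ends e).1 ∈ S <;> by_cases h2 : (ends e).1 ∈ R <;>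
    by_cases h3 : (ends e).2 ∈ S <;> by_cases h4 : (ends e).2 ∈ R <;>
    simp [h1, h2, h3, h4] <;> norm_num

theorem cutEdges_sdiff_subset (ends : E → V × V) (S R : Finset V) :
    cutEdges ends (S \ R) ⊆ cutEdges ends S ∪ cutEdges ends (S ∩ R) := by
  intro e he
  simp only [mem_cutEdges, Finset.mem_sdiff] at he
  simp only [Finset.mem_union, mem_cutEdges, Finset.mem_inter]
  tauto

/-- Weighted edge-cut sums: the sum over a cut as a `chi`-weighted full sum. -/
theorem cut_sum_eq (ends : E → V × V) (S : Finset V) (y : E → ℝ) :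
    ∑ e ∈ cutEdges ends S, y e = ∑ e : E, (if e ∈ cutEdges ends S then y e else 0) := by
  rw [Finset.sum_ite_mem, Finset.univ_inter]

theorem sum_identity (ends : E → V × V) (S R : Finset V) (y : E → ℝ) :
    (∑ e ∈ cutEdges ends S, y e) + (∑ e ∈ cutEdges ends R, y e) =
      (∑ e ∈ cutEdges ends (S ∪ R), y e) + (∑ e ∈ cutEdges ends (S ∩ R), y e) +
      2 * (∑ e ∈ betweenEdges ends (S \ R) (R \ S), y e) := by
  have hb : ∑ e ∈ betweenEdges ends (S \ R) (R \ S), y e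
      = ∑ e : E, (if e ∈ betweenEdges ends (S \ R) (R \ S) then y e else 0) := by
    rw [Finset.sum_ite_mem, Finset.univ_inter]
  rw [cut_sum_eq, cut_sum_eq, cut_sum_eq, cut_sum_eq, hb, Finset.mul_sum,
    ← Finset.sum_add_distrib, ← Finset.sum_add_distrib, ← Finset.sum_add_distrib]
  apply Finset.sum_congr rfl
  intro e _
  have := ind_identity ends S R e
  by_cases h1 : e ∈ cutEdges ends S <;> by_cases h2 : e ∈ cutEdges ends R <;>
    by_cases h3 : e ∈ cutEdges ends (S ∪ R) <;> by_cases h4 : e ∈ cutEdges ends (S ∩ R) <;>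
    by_cases h5 : e ∈ betweenEdges ends (S \ R) (R \ S) <;>
    simp only [h1, h2, h3, h4, h5, if_true, if_false, if_pos, if_neg] at this ⊢ <;>
    nlinarith [this]

end GhostAux

namespace GhostAux

/-! ### Misc helpers -/

theorem two_le_card_of {A B X : Finset V} (hA : A ⊆ X) (hB : B ⊆ X)
    (hAne : A.Nonempty) (hBne : B.Nonempty) (hd : Disjoint A B) : 2 ≤ X.card := by
  obtain ⟨a, ha⟩ := hAne
  obtain ⟨b, hb⟩ := hBne
  have hne : a ≠ b := by
    intro h; subst h; exact (Finset.disjoint_left.mp hd ha) hb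
  exact Finset.one_lt_card.mpr ⟨a, hA ha, b, hB hb, hne⟩

theorem noexc_of_cards {U S : Finset V} (hS : 2 ≤ S.card) (hSc : 2 ≤ Sᶜ.card) :
    ¬∃ u ∈ U, S = {u} ∨ Sᶜ = {u} := by
  rintro ⟨u, -, h | h⟩
  · rw [h] at hS; simp at hS
  · rw [h] at hSc; simp at hSc

theorem fRes_of_noexc {k : ℤ} {I H : V → V → ℕ} {U : Finset V} {S : Finset V}
    (h : ¬∃ u ∈ U, S = {u} ∨ Sᶜ = {u}) :
    fRes k I H U S = k - (degS I S : ℤ) - 2 * (degS H S : ℤ) := if_neg h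

theorem fRes_compl (k : ℤ) (I H : V → V → ℕ) (U : Finset V)
    (hI : ∀ a b, I a b = I b a) (hH : ∀ a b, H a b = H b a) (S : Finset V) :
    fRes k I H U Sᶜ = fRes k I H U S := by
  unfold fRes
  rw [degS_compl hI, degS_compl hH]
  congr 1
  simp only [compl_compl, eq_iff_iff]
  constructor <;> (rintro ⟨u, hu, h | h⟩ <;> exact ⟨u, hu, by tauto⟩)

theorem isTight_compl {k : ℤ} {I H : V → V → ℕ} {U : Finset V} {ends : E → V × V} {x : E → ℝ}
    (hI : ∀ a b, I a b = I b a) (hH : ∀ a b, H a b = H b a) {S : Finset V}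
    (h : IsTight k I H U ends x S) : IsTight k I H U ends x Sᶜ := by
  unfold IsTight at *
  rw [cutEdges_compl, fRes_compl k I H U hI hH, h]

theorem ne_univ_of_notmem {S : Finset V} {a : V} (h : a ∉ S) : S ≠ univ := by
  intro hh; rw [hh] at h; exact h (Finset.mem_univ a)

theorem isCut_compl {S : Finset V} (h : IsCut S) : IsCut Sᶜ := by
  obtain ⟨⟨a, ha⟩, hne⟩ := h
  constructor
  · rwa [← Finset.compl_ne_univ_iff_nonempty, compl_compl]
  · exact ne_univ_of_notmem (by simpa using ha)

theorem isCut_of_nonempty_of_notmem {S : Finset V} {a : V} (hne : S.Nonempty) (h : a ∉ S) :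
    IsCut S := ⟨hne, ne_univ_of_notmem h⟩

/-! ### The crossing relation -/

def Crosses (A B : Finset V) : Prop := ¬Disjoint A B ∧ ¬A ⊆ B ∧ ¬B ⊆ A

instance : ∀ (A B : Finset V), Decidable (Crosses A B) := fun A B => by
  unfold Crosses; infer_instance

theorem crosses_symm {A B : Finset V} (h : Crosses A B) : Crosses B A :=
  ⟨fun hd => h.1 hd.symm, h.2.2, h.2.1⟩

theorem not_crosses_inter {S R : Finset V} (h : Crosses (S ∩ R) R) : False :=
  h.2.1 Finset.inter_subset_right

theorem not_crosses_union {S R : Finset V} (h : Crosses (S ∪ R) R) : False :=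
  h.2.2 Finset.subset_union_right

theorem not_crosses_sdiff {S R : Finset V} (h : Crosses (S \ R) R) : False :=
  h.1 Finset.sdiff_disjoint

theorem not_crosses_rdiff {S R : Finset V} (h : Crosses (R \ S) R) : False :=
  h.2.1 Finset.sdiff_subset

theorem cl_inter {S R T : Finset V} (hSR : Crosses S R)
    (hTR : Disjoint T R ∨ T ⊆ R ∨ R ⊆ T) (hXT : Crosses (S ∩ R) T) : Crosses S T := by
  obtain ⟨hnd, hns, hnt⟩ := hXT
  rcases hTR with h | h | h
  · exact absurd (h.symm.mono_left Finset.inter_subset_right) hnd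
  · refine ⟨fun hd => hnd (hd.mono_left Finset.inter_subset_left), ?_, ?_⟩
    · intro hST; exact hns fun a ha => hST (Finset.mem_inter.mp ha).1
    · intro hTS; exact hnt (Finset.subset_inter hTS h)
  · refine ⟨fun hd => hnd (hd.mono_left Finset.inter_subset_left), ?_, ?_⟩
    · intro hST; exact hns fun a ha => hST (Finset.mem_inter.mp ha).1
    · intro hTS; exact hSR.2.2 (h.trans hTS)

theorem cl_union {S R T : Finset V} (hSR : Crosses S R)
    (hTR : Disjoint T R ∨ T ⊆ R ∨ R ⊆ T) (hXT : Crosses (S ∪ R) T) : Crosses S T := by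
  obtain ⟨hnd, hns, hnt⟩ := hXT
  rcases hTR with h | h | h
  · refine ⟨fun hd => hnd (Finset.disjoint_union_left.mpr ⟨hd, h.symm⟩), ?_, ?_⟩
    · intro hST
      exact hSR.1 (Finset.disjoint_left.mpr fun a haS => Finset.disjoint_left.mp h (hST haS))
    · intro hTS; exact hnt (hTS.trans Finset.subset_union_left)
  · exact absurd (h.trans Finset.subset_union_right) hnt
  · refine ⟨fun hd => hSR.1 (hd.mono_right h), ?_, ?_⟩
    · intro hST; exact hns (Finset.union_subset hST h)
    · intro hTS; exact hSR.2.2 (h.trans hTS)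

theorem cl_sdiff {S R T : Finset V} (hSR : Crosses S R)
    (hTR : Disjoint T R ∨ T ⊆ R ∨ R ⊆ T) (hXT : Crosses (S \ R) T) : Crosses S T := by
  obtain ⟨hnd, hns, hnt⟩ := hXT
  rcases hTR with h | h | h
  · refine ⟨fun hd => hnd (hd.mono_left Finset.sdiff_subset), ?_, ?_⟩
    · intro hST; exact hns fun a ha => hST (Finset.mem_sdiff.mp ha).1
    · intro hTS
      refine hnt fun a haT => Finset.mem_sdiff.mpr ⟨hTS haT, ?_⟩
      exact Finset.disjoint_left.mp h haT
  · refine absurd (Finset.disjoint_left.mpr fun a ha hT => ?_) hnd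
    exact (Finset.mem_sdiff.mp ha).2 (h hT)
  · refine ⟨fun hd => hnd (hd.mono_left Finset.sdiff_subset), ?_, ?_⟩
    · intro hST; exact hns fun a ha => hST (Finset.mem_sdiff.mp ha).1
    · intro hTS; exact hSR.2.2 (h.trans hTS)

theorem cl_rdiff {S R T : Finset V} (hSR : Crosses S R)
    (hTR : Disjoint T R ∨ T ⊆ R ∨ R ⊆ T) (hXT : Crosses (R \ S) T) : Crosses S T := by
  obtain ⟨hnd, hns, hnt⟩ := hXT
  rcases hTR with h | h | h
  · exact absurd (h.symm.mono_left Finset.sdiff_subset) hnd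
  · obtain ⟨a, haT, haD⟩ := Finset.not_subset.mp hnt
    have haS : a ∈ S := by
      by_contra haS
      exact haD (Finset.mem_sdiff.mpr ⟨h haT, haS⟩)
    refine ⟨Finset.not_disjoint_iff.mpr ⟨a, haS, haT⟩, ?_, ?_⟩
    · intro hST; exact hSR.2.1 (hST.trans h)
    · intro hTS
      refine hnd (Finset.disjoint_left.mpr fun b hb hbT => ?_)
      exact (Finset.mem_sdiff.mp hb).2 (hTS hbT)
  · exact absurd (Finset.sdiff_subset.trans h) hns

/-! ### Pigeonhole on a tight pair set -/

theorem deg_pair {m : V → V → ℕ} (hm : ∀ a b, m a b = m b a) {y z : V} (hyz : y ≠ z) :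
    degS m {y} + degS m {z} = degS m ({y, z} : Finset V) + 2 * m y z := by
  have hyc : ({y} : Finset V)ᶜ = {z} ∪ ({y, z} : Finset V)ᶜ := by
    ext a
    simp only [Finset.mem_compl, Finset.mem_singleton, Finset.mem_union, Finset.mem_insert]
    constructor
    · intro h; by_cases h2 : a = z
      · exact Or.inl h2
      · exact Or.inr (by tauto)
    · rintro (h | h)
      · subst h; exact fun hh => hyz hh.symm
      · tauto
  have hzc : ({z} : Finset V)ᶜ = {y} ∪ ({y, z} : Finset V)ᶜ := by
    ext a
    simp only [Finset.mem_compl, Finset.mem_singleton, Finset.mem_union, Finset.mem_insert]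
    constructor
    · intro h; by_cases h2 : a = y
      · exact Or.inl h2
      · exact Or.inr (by tauto)
    · rintro (h | h)
      · subst h; exact fun hh => hyz hh
      · tauto
  have hdy : Disjoint ({z} : Finset V) ({y, z} : Finset V)ᶜ := by
    rw [Finset.disjoint_left]; intro a h1 h2
    simp only [Finset.mem_singleton] at h1
    simp only [Finset.mem_compl, Finset.mem_insert, Finset.mem_singleton] at h2
    exact h2 (Or.inr h1)
  have hdz : Disjoint ({y} : Finset V) ({y, z} : Finset V)ᶜ := by
    rw [Finset.disjoint_left]; intro a h1 h2
    simp only [Finset.mem_singleton] at h1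
    simp only [Finset.mem_compl, Finset.mem_insert, Finset.mem_singleton] at h2
    exact h2 (Or.inl h1)
  have hsplit : ({y, z} : Finset V) = {y} ∪ {z} := by
    ext a; simp
  have hdyz : Disjoint ({y} : Finset V) ({z} : Finset V) := by
    rw [Finset.disjoint_left]; intro a h1 h2
    simp only [Finset.mem_singleton] at h1 h2
    exact hyz (h1 ▸ h2 ▸ rfl)
  unfold degS
  rw [hyc, hzc, dB_union_right _ hdy, dB_union_right _ hdz]
  nth_rewrite 3 [hsplit]
  rw [dB_union_left _ hdyz, dB_singleton, dB_singleton, hm z y]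
  ring

end GhostAux

namespace GhostAux

theorem ceA (S R : Finset V) : Sᶜ ∩ R = R \ S := by
  ext a; simp only [Finset.mem_inter, Finset.mem_compl, Finset.mem_sdiff]; tauto
theorem ceB (S R : Finset V) : Sᶜ \ R = (S ∪ R)ᶜ := by
  ext a; simp only [Finset.mem_sdiff, Finset.mem_compl, Finset.mem_union]; tauto
theorem ceC (S R : Finset V) : R \ Sᶜ = S ∩ R := by
  ext a; simp only [Finset.mem_sdiff, Finset.mem_compl, Finset.mem_inter]; tauto
theorem ceD (S R : Finset V) : (Sᶜ ∪ R)ᶜ = S \ R := by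
  ext a; simp only [Finset.mem_compl, Finset.mem_union, Finset.mem_sdiff]; tauto
theorem ceE (S R : Finset V) : Sᶜ ∩ Rᶜ = (S ∪ R)ᶜ := by
  ext a; simp only [Finset.mem_inter, Finset.mem_compl, Finset.mem_union]; tauto
theorem ceF (S R : Finset V) : Sᶜ \ Rᶜ = R \ S := by
  ext a; simp only [Finset.mem_sdiff, Finset.mem_compl]; tauto
theorem ceG (S R : Finset V) : Rᶜ \ Sᶜ = S \ R := by
  ext a; simp only [Finset.mem_sdiff, Finset.mem_compl]; tauto
theorem ceH (S R : Finset V) : (Sᶜ ∪ Rᶜ)ᶜ = S ∩ R := by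
  ext a; simp only [Finset.mem_compl, Finset.mem_union, Finset.mem_inter]; tauto
theorem ceI2 (S R : Finset V) : (Rᶜ ∪ Sᶜ)ᶜ = S ∩ R := by
  ext a; simp only [Finset.mem_compl, Finset.mem_union, Finset.mem_inter]; tauto
theorem ceJ (S R : Finset V) : Rᶜ ∩ Sᶜ = (S ∪ R)ᶜ := by
  ext a; simp only [Finset.mem_inter, Finset.mem_compl, Finset.mem_union]; tauto

end GhostAux

namespace GhostAux

section Main

variable (k : ℤ) (I H : V → V → ℕ) (U : Finset V) (ends : E → V × V) (x : E → ℝ)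

theorem sig_cast (X : Finset V) :
    (degS (fun a b => I a b + 2 * H a b) X : ℤ) = (degS I X : ℤ) + 2 * (degS H X : ℤ) := by
  have := degS_two I H X
  exact_mod_cast congrArg (Nat.cast : ℕ → ℤ) this

theorem fRes_noexc_m {X : Finset V} (h : ¬∃ u ∈ U, X = {u} ∨ Xᶜ = {u}) :
    fRes k I H U X = k - (degS (fun a b => I a b + 2 * H a b) X : ℤ) := by
  rw [fRes_of_noexc h, sig_cast]; ring

theorem pigeon_mu {μ : ℤ} (hμ2 : 2 * μ ≤ k - 2)
    (hI : ∀ a b, I a b = I b a) (hH : ∀ a b, H a b = H b a)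
    (hU2 : ∀ u ∈ U, k - 2 ≤ (degS I {u} : ℤ) + 2 * (degS H {u} : ℤ))
    {y z : V} (hy : y ∈ U) (hz : z ∈ U) (hyz : y ≠ z)
    (hM : (degS I ({y, z} : Finset V) : ℤ) + 2 * (degS H ({y, z} : Finset V) : ℤ) ≤ k - 1) :
    μ ≤ (I y z : ℤ) + 2 * (H y z : ℤ) := by
  have hm : ∀ a b, I a b + 2 * H a b = I b a + 2 * H b a := fun a b => by rw [hI, hH]
  have hpair := deg_pair (m := fun a b => I a b + 2 * H a b) hm hyz
  have hpairZ : (degS (fun a b => I a b + 2 * H a b) {y} : ℤ) +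
      (degS (fun a b => I a b + 2 * H a b) {z} : ℤ) =
      (degS (fun a b => I a b + 2 * H a b) ({y, z} : Finset V) : ℤ) +
      2 * ((I y z : ℤ) + 2 * (H y z : ℤ)) := by exact_mod_cast hpair
  rw [sig_cast, sig_cast, sig_cast] at hpairZ
  have h1 := hU2 y hy
  have h2 := hU2 z hz
  omega

theorem pair_heavy {μ : ℤ}
    (hIH : ∀ u v : V, 1 ≤ H u v → μ ≤ (I u v : ℤ))
    (hng : ∀ u ∈ U, ∀ v ∈ U, u ≠ v → μ ≤ (I u v : ℤ) → H u v ≠ 0)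
    {y z : V} (hy : y ∈ U) (hz : z ∈ U) (hyz : y ≠ z)
    (h : μ ≤ (I y z : ℤ) + 2 * (H y z : ℤ)) :
    1 ≤ H y z ∧ μ + 2 ≤ (I y z : ℤ) + 2 * (H y z : ℤ) := by
  by_cases h0 : H y z = 0
  · exact absurd h0 (hng y hy z hz hyz (by simpa [h0] using h))
  · have h1 : 1 ≤ H y z := Nat.one_le_iff_ne_zero.mpr h0
    have h2 := hIH y z h1
    constructor
    · exact h1
    · have : (1 : ℤ) ≤ (H y z : ℤ) := by exact_mod_cast h1
      linarith

theorem two_H_edges (hU1 : ∀ u ∈ U, degS H {u} ≤ 1)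
    {y z1 z2 : V} (hy : y ∈ U) (h1 : 1 ≤ H y z1) (h2 : 1 ≤ H y z2)
    (hne : z1 ≠ z2) (hy1 : z1 ≠ y) (hy2 : z2 ≠ y) : False := by
  have hdeg : degS H {y} = ∑ v ∈ ({y} : Finset V)ᶜ, H y v := by
    unfold degS dBetween; rw [Finset.sum_singleton]
  have hsub : ({z1, z2} : Finset V) ⊆ ({y} : Finset V)ᶜ := by
    intro a ha
    simp only [Finset.mem_insert, Finset.mem_singleton] at ha
    simp only [Finset.mem_compl, Finset.mem_singleton]
    rcases ha with h | h <;> (subst h; assumption)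
  have hle : H y z1 + H y z2 ≤ degS H {y} := by
    rw [hdeg, ← Finset.sum_pair hne]
    exact Finset.sum_le_sum_of_subset hsub
  have := hU1 y hy
  omega

/-- The central numerical contradiction: if `S ∩ R = {u}` with `u ∈ U`, and the
`I + 2H`-multiplicity between `u` and `R \ S` is at least `μ + 2`, everything tight, then
a contradiction follows. -/
theorem core_contradiction
    (hI : ∀ a b, I a b = I b a) (hH : ∀ a b, H a b = H b a)
    {μ : ℤ} (hμ1 : k - 3 ≤ 2 * μ)
    (hfeas : x ∈ polyP k I H U ends)
    {S R : Finset V} (htS : IsTight k I H U ends x S) (htR : IsTight k I H U ends x R)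
    {u : V} (hu : u ∈ U)
    (hP1 : S ∩ R = {u})
    (hP2 : (S \ R).Nonempty) (hP3 : (R \ S).Nonempty) (hP4 : ((S ∪ R)ᶜ).Nonempty)
    (hnf2 : ¬∃ w ∈ U, S \ R = {w}) (hnf4 : ¬∃ w ∈ U, (S ∪ R)ᶜ = {w})
    (hbig : μ + 2 ≤ (dBetween (fun a b => I a b + 2 * H a b) (S ∩ R) (R \ S) : ℤ)) :
    False := by
  set m : V → V → ℕ := fun a b => I a b + 2 * H a b with hmdef
  have hm : ∀ a b, m a b = m b a := fun a b => by simp only [hmdef]; rw [hI, hH]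
  have hP1ne : (S ∩ R).Nonempty := ⟨u, by simp [hP1]⟩
  -- subset facts
  have hsub13 : R \ S ⊆ Sᶜ := fun a ha => by
    simp only [Finset.mem_compl]; exact (Finset.mem_sdiff.mp ha).2
  have hsub14 : (S ∪ R)ᶜ ⊆ Sᶜ := fun a ha => by
    simp only [Finset.mem_compl] at *; exact fun h => ha (Finset.mem_union_left _ h)
  have hsub24 : (S ∪ R)ᶜ ⊆ Rᶜ := fun a ha => by
    simp only [Finset.mem_compl] at *; exact fun h => ha (Finset.mem_union_right _ h)
  have hsubIR : S ∩ R ⊆ R := Finset.inter_subset_right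
  have hsubIS : S ∩ R ⊆ S := Finset.inter_subset_left
  have hsub2Rc : S \ R ⊆ Rᶜ := fun a ha => by
    simp only [Finset.mem_compl]; exact (Finset.mem_sdiff.mp ha).2
  -- cardinalities
  have h2S : 2 ≤ S.card := two_le_card_of hsubIS Finset.sdiff_subset hP1ne hP2 (d12 S R)
  have h2Sc : 2 ≤ Sᶜ.card := two_le_card_of hsub13 hsub14 hP3 hP4 (d34 S R)
  have h2R : 2 ≤ R.card := two_le_card_of hsubIR Finset.sdiff_subset hP1ne hP3 (d13 S R)
  have h2Rc : 2 ≤ Rᶜ.card := two_le_card_of hsub2Rc hsub24 hP2 hP4 (d24 S R)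
  -- no exceptions
  have hnxS : ¬∃ w ∈ U, S = {w} ∨ Sᶜ = {w} := noexc_of_cards h2S h2Sc
  have hnxR : ¬∃ w ∈ U, R = {w} ∨ Rᶜ = {w} := noexc_of_cards h2R h2Rc
  have hnxD : ¬∃ w ∈ U, S \ R = {w} ∨ (S \ R)ᶜ = {w} := by
    rintro ⟨w, hw, h | h⟩
    · exact hnf2 ⟨w, hw, h⟩
    · have hsubI : S ∩ R ⊆ (S \ R)ᶜ := fun a ha => by
        simp only [Finset.mem_compl, Finset.mem_sdiff]
        exact fun hh => hh.2 (Finset.mem_inter.mp ha).2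
      have hsub3 : R \ S ⊆ (S \ R)ᶜ := fun a ha => by
        simp only [Finset.mem_compl, Finset.mem_sdiff]
        exact fun hh => (Finset.mem_sdiff.mp ha).2 hh.1
      have := two_le_card_of hsubI hsub3 hP1ne hP3 (d13 S R)
      rw [h] at this; simp at this
  have hnxU : ¬∃ w ∈ U, S ∪ R = {w} ∨ (S ∪ R)ᶜ = {w} := by
    rintro ⟨w, hw, h | h⟩
    · have := two_le_card_of (X := S ∪ R) (hsubIS.trans Finset.subset_union_left)
        ((Finset.sdiff_subset (s := S) (t := R)).trans Finset.subset_union_left) hP1ne hP2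
        (d12 S R)
      rw [h] at this; simp at this
    · exact hnf4 ⟨w, hw, h⟩
  -- f values
  have hfS := fRes_noexc_m k I H U hnxS
  have hfR := fRes_noexc_m k I H U hnxR
  have hfD := fRes_noexc_m k I H U hnxD
  have hfU := fRes_noexc_m k I H U hnxU
  -- cut properties
  have hcD : IsCut (S \ R) := by
    refine isCut_of_nonempty_of_notmem hP2 (a := u) ?_
    have : u ∈ S ∩ R := by simp [hP1]
    simp only [Finset.mem_sdiff]
    exact fun hh => hh.2 (Finset.mem_inter.mp this).2
  have hcU : IsCut (S ∪ R) := by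
    obtain ⟨a, ha⟩ := hP4
    refine isCut_of_nonempty_of_notmem (hP1ne.mono (hsubIS.trans Finset.subset_union_left))
      (a := a) (by simpa using ha)
  -- feasibility and tightness facts
  have A1 : (fRes k I H U (S \ R) : ℝ) ≤ ∑ e ∈ cutEdges ends (S \ R), x e := hfeas.2 _ hcD
  have A5 : (fRes k I H U (S ∪ R) : ℝ) ≤ ∑ e ∈ cutEdges ends (S ∪ R), x e := hfeas.2 _ hcU
  have A2 : ∑ e ∈ cutEdges ends (S \ R), x e ≤
      (∑ e ∈ cutEdges ends S, x e) + ∑ e ∈ cutEdges ends (S ∩ R), x e := by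
    have hs := Finset.sum_le_sum_of_subset_of_nonneg (cutEdges_sdiff_subset ends S R)
      (fun e _ _ => (hfeas.1 e).1)
    have hui := Finset.sum_union_inter (s₁ := cutEdges ends S) (s₂ := cutEdges ends (S ∩ R))
      (f := x)
    have hnn : (0:ℝ) ≤ ∑ e ∈ cutEdges ends S ∩ cutEdges ends (S ∩ R), x e :=
      Finset.sum_nonneg fun e _ => (hfeas.1 e).1
    linarith
  have A4 := sum_identity ends S R x
  have A6 : (0:ℝ) ≤ ∑ e ∈ betweenEdges ends (S \ R) (R \ S), x e :=
    Finset.sum_nonneg fun e _ => (hfeas.1 e).1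
  -- sigma decompositions, cast to ℤ
  have hσS : (degS m S : ℤ) = (dBetween m (S ∩ R) (R \ S) : ℤ) +
      (dBetween m (S ∩ R) (S ∪ R)ᶜ : ℤ) +
      ((dBetween m (S \ R) (R \ S) : ℤ) + (dBetween m (S \ R) (S ∪ R)ᶜ : ℤ)) := by
    exact_mod_cast congrArg (Nat.cast : ℕ → ℤ) (sigma_S S R hm)
  have hσR : (degS m R : ℤ) = (dBetween m (S ∩ R) (S \ R) : ℤ) +
      (dBetween m (S ∩ R) (S ∪ R)ᶜ : ℤ) +
      ((dBetween m (S \ R) (R \ S) : ℤ) + (dBetween m (R \ S) (S ∪ R)ᶜ : ℤ)) := by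
    exact_mod_cast congrArg (Nat.cast : ℕ → ℤ) (sigma_R S R hm)
  have hσU : (degS m (S ∪ R) : ℤ) = (dBetween m (S ∩ R) (S ∪ R)ᶜ : ℤ) +
      ((dBetween m (S \ R) (S ∪ R)ᶜ : ℤ) + (dBetween m (R \ S) (S ∪ R)ᶜ : ℤ)) := by
    exact_mod_cast congrArg (Nat.cast : ℕ → ℤ) (sigma_union S R hm)
  have hσD : (degS m (S \ R) : ℤ) = (dBetween m (S ∩ R) (S \ R) : ℤ) +
      ((dBetween m (S \ R) (R \ S) : ℤ) + (dBetween m (S \ R) (S ∪ R)ᶜ : ℤ)) := by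
    exact_mod_cast congrArg (Nat.cast : ℕ → ℤ) (sigma_sdiff S R hm)
  -- tightness in ℝ
  have htSR : ∑ e ∈ cutEdges ends S, x e = ((k - (degS m S : ℤ) : ℤ) : ℝ) := by
    rw [htS, hfS]
  have htRR : ∑ e ∈ cutEdges ends R, x e = ((k - (degS m R : ℤ) : ℤ) : ℝ) := by
    rw [htR, hfR]
  rw [hfD] at A1
  rw [hfU] at A5
  -- final numeric contradiction
  have hw14 : (0:ℤ) ≤ (dBetween m (S ∩ R) (S ∪ R)ᶜ : ℤ) := Int.ofNat_nonneg _
  have hw23 : (0:ℤ) ≤ (dBetween m (S \ R) (R \ S) : ℤ) := Int.ofNat_nonneg _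
  -- x(δ(S∩R)) lower bound
  have hlow : ((k - (degS m (S \ R) : ℤ) : ℤ) : ℝ) - ((k - (degS m S : ℤ) : ℤ) : ℝ) ≤
      ∑ e ∈ cutEdges ends (S ∩ R), x e := by linarith
  have hup : ∑ e ∈ cutEdges ends (S ∩ R), x e ≤
      ((k - (degS m S : ℤ) : ℤ) : ℝ) + ((k - (degS m R : ℤ) : ℤ) : ℝ) -
        ((k - (degS m (S ∪ R) : ℤ) : ℤ) : ℝ) := by linarith
  have hcomb : ((k - (degS m (S \ R) : ℤ) : ℤ) : ℝ) - ((k - (degS m S : ℤ) : ℤ) : ℝ) ≤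
      ((k - (degS m S : ℤ) : ℤ) : ℝ) + ((k - (degS m R : ℤ) : ℤ) : ℝ) -
        ((k - (degS m (S ∪ R) : ℤ) : ℤ) : ℝ) := le_trans hlow (le_trans (le_refl _) hup)
  have hcombZ : (k - (degS m (S \ R) : ℤ)) - (k - (degS m S : ℤ)) ≤
      (k - (degS m S : ℤ)) + (k - (degS m R : ℤ)) - (k - (degS m (S ∪ R) : ℤ)) := by
    exact_mod_cast hcomb
  rw [hσS, hσR, hσU, hσD] at hcombZ
  omega

end Main

end GhostAux

namespace GhostAux

section Main2

variable (k : ℤ) (I H : V → V → ℕ) (U : Finset V) (ends : E → V × V) (x : E → ℝ)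

/-- Uncrossing two tight sets whose intersection- and union-corners are not `U`-singletons. -/
theorem uncross_tight
    (hI : ∀ a b, I a b = I b a) (hH : ∀ a b, H a b = H b a)
    (hfeas : x ∈ polyP k I H U ends) (hxpos : ∀ e, 0 < x e)
    {S R : Finset V} (htS : IsTight k I H U ends x S) (htR : IsTight k I H U ends x R)
    (hP1 : (S ∩ R).Nonempty) (hP2 : (S \ R).Nonempty) (hP3 : (R \ S).Nonempty)
    (hP4 : ((S ∪ R)ᶜ).Nonempty)
    (hnf1 : ¬∃ w ∈ U, S ∩ R = {w}) (hnf4 : ¬∃ w ∈ U, (S ∪ R)ᶜ = {w}) :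
    IsTight k I H U ends x (S ∩ R) ∧ IsTight k I H U ends x (S ∪ R) ∧
      chiCut ends S + chiCut ends R = chiCut ends (S ∩ R) + chiCut ends (S ∪ R) := by
  set m : V → V → ℕ := fun a b => I a b + 2 * H a b with hmdef
  have hm : ∀ a b, m a b = m b a := fun a b => by simp only [hmdef]; rw [hI, hH]
  -- subset facts
  have hsub13 : R \ S ⊆ Sᶜ := fun a ha => by
    simp only [Finset.mem_compl]; exact (Finset.mem_sdiff.mp ha).2
  have hsub14 : (S ∪ R)ᶜ ⊆ Sᶜ := fun a ha => by
    simp only [Finset.mem_compl] at *; exact fun h => ha (Finset.mem_union_left _ h)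
  have hsub24 : (S ∪ R)ᶜ ⊆ Rᶜ := fun a ha => by
    simp only [Finset.mem_compl] at *; exact fun h => ha (Finset.mem_union_right _ h)
  have hsub2Rc : S \ R ⊆ Rᶜ := fun a ha => by
    simp only [Finset.mem_compl]; exact (Finset.mem_sdiff.mp ha).2
  have hsubIS : S ∩ R ⊆ S := Finset.inter_subset_left
  have hsubIR : S ∩ R ⊆ R := Finset.inter_subset_right
  -- cards and no-exceptions
  have h2S : 2 ≤ S.card := two_le_card_of hsubIS Finset.sdiff_subset hP1 hP2 (d12 S R)
  have h2Sc : 2 ≤ Sᶜ.card := two_le_card_of hsub13 hsub14 hP3 hP4 (d34 S R)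
  have h2R : 2 ≤ R.card := two_le_card_of hsubIR Finset.sdiff_subset hP1 hP3 (d13 S R)
  have h2Rc : 2 ≤ Rᶜ.card := two_le_card_of hsub2Rc hsub24 hP2 hP4 (d24 S R)
  have hnxS : ¬∃ w ∈ U, S = {w} ∨ Sᶜ = {w} := noexc_of_cards h2S h2Sc
  have hnxR : ¬∃ w ∈ U, R = {w} ∨ Rᶜ = {w} := noexc_of_cards h2R h2Rc
  have hnxI : ¬∃ w ∈ U, S ∩ R = {w} ∨ (S ∩ R)ᶜ = {w} := by
    rintro ⟨w, hw, h | h⟩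
    · exact hnf1 ⟨w, hw, h⟩
    · have hsa : S \ R ⊆ (S ∩ R)ᶜ := fun a ha => by
        simp only [Finset.mem_compl, Finset.mem_inter]
        exact fun hh => (Finset.mem_sdiff.mp ha).2 hh.2
      have hsb : R \ S ⊆ (S ∩ R)ᶜ := fun a ha => by
        simp only [Finset.mem_compl, Finset.mem_inter]
        exact fun hh => (Finset.mem_sdiff.mp ha).2 hh.1
      have := two_le_card_of hsa hsb hP2 hP3 (d23 S R)
      rw [h] at this; simp at this
  have hnxU : ¬∃ w ∈ U, S ∪ R = {w} ∨ (S ∪ R)ᶜ = {w} := by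
    rintro ⟨w, hw, h | h⟩
    · have := two_le_card_of (X := S ∪ R) (hsubIS.trans Finset.subset_union_left)
        ((Finset.sdiff_subset (s := S) (t := R)).trans Finset.subset_union_left) hP1 hP2
        (d12 S R)
      rw [h] at this; simp at this
    · exact hnf4 ⟨w, hw, h⟩
  have hfS := fRes_noexc_m k I H U hnxS
  have hfR := fRes_noexc_m k I H U hnxR
  have hfI := fRes_noexc_m k I H U hnxI
  have hfU := fRes_noexc_m k I H U hnxU
  -- cuts
  have hcI : IsCut (S ∩ R) := by
    obtain ⟨a, ha⟩ := hP4
    exact isCut_of_nonempty_of_notmem hP1 (a := a)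
      (fun hh => (Finset.mem_compl.mp ha) (Finset.mem_union_left _ (Finset.mem_inter.mp hh).1))
  have hcU : IsCut (S ∪ R) := by
    obtain ⟨a, ha⟩ := hP4
    exact isCut_of_nonempty_of_notmem (hP1.mono (hsubIS.trans Finset.subset_union_left))
      (a := a) (by simpa using ha)
  have B1 : (fRes k I H U (S ∩ R) : ℝ) ≤ ∑ e ∈ cutEdges ends (S ∩ R), x e := hfeas.2 _ hcI
  have B2 : (fRes k I H U (S ∪ R) : ℝ) ≤ ∑ e ∈ cutEdges ends (S ∪ R), x e := hfeas.2 _ hcU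
  have A4 := sum_identity ends S R x
  have A6 : (0:ℝ) ≤ ∑ e ∈ betweenEdges ends (S \ R) (R \ S), x e :=
    Finset.sum_nonneg fun e _ => (hfeas.1 e).1
  -- sigma decompositions in ℤ
  have hσS : (degS m S : ℤ) = (dBetween m (S ∩ R) (R \ S) : ℤ) +
      (dBetween m (S ∩ R) (S ∪ R)ᶜ : ℤ) +
      ((dBetween m (S \ R) (R \ S) : ℤ) + (dBetween m (S \ R) (S ∪ R)ᶜ : ℤ)) := by
    exact_mod_cast congrArg (Nat.cast : ℕ → ℤ) (sigma_S S R hm)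
  have hσR : (degS m R : ℤ) = (dBetween m (S ∩ R) (S \ R) : ℤ) +
      (dBetween m (S ∩ R) (S ∪ R)ᶜ : ℤ) +
      ((dBetween m (S \ R) (R \ S) : ℤ) + (dBetween m (R \ S) (S ∪ R)ᶜ : ℤ)) := by
    exact_mod_cast congrArg (Nat.cast : ℕ → ℤ) (sigma_R S R hm)
  have hσU : (degS m (S ∪ R) : ℤ) = (dBetween m (S ∩ R) (S ∪ R)ᶜ : ℤ) +
      ((dBetween m (S \ R) (S ∪ R)ᶜ : ℤ) + (dBetween m (R \ S) (S ∪ R)ᶜ : ℤ)) := by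
    exact_mod_cast congrArg (Nat.cast : ℕ → ℤ) (sigma_union S R hm)
  have hσI : (degS m (S ∩ R) : ℤ) = (dBetween m (S ∩ R) (S \ R) : ℤ) +
      ((dBetween m (S ∩ R) (R \ S) : ℤ) + (dBetween m (S ∩ R) (S ∪ R)ᶜ : ℤ)) := by
    exact_mod_cast congrArg (Nat.cast : ℕ → ℤ) (sigma_inter S R hm)
  have htSR : ∑ e ∈ cutEdges ends S, x e = ((k - (degS m S : ℤ) : ℤ) : ℝ) := by rw [htS, hfS]
  have htRR : ∑ e ∈ cutEdges ends R, x e = ((k - (degS m R : ℤ) : ℤ) : ℝ) := by rw [htR, hfR]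
  rw [hfI] at B1
  rw [hfU] at B2
  simp only [← hmdef] at B1 B2 htSR htRR
  -- the submodularity slack in ℝ
  have hslackZ : (k - (degS m (S ∩ R) : ℤ)) + (k - (degS m (S ∪ R) : ℤ)) =
      (k - (degS m S : ℤ)) + (k - (degS m R : ℤ)) +
        2 * (dBetween m (S \ R) (R \ S) : ℤ) := by
    rw [hσS, hσR, hσU, hσI]; ring
  have hw23 : (0:ℤ) ≤ (dBetween m (S \ R) (R \ S) : ℤ) := Int.ofNat_nonneg _
  have hw23R : ((0:ℤ) : ℝ) ≤ ((dBetween m (S \ R) (R \ S) : ℤ) : ℝ) := by exact_mod_cast hw23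
  have hslackR : ((k - (degS m (S ∩ R) : ℤ) : ℤ) : ℝ) + ((k - (degS m (S ∪ R) : ℤ) : ℤ) : ℝ) =
      ((k - (degS m S : ℤ) : ℤ) : ℝ) + ((k - (degS m R : ℤ) : ℤ) : ℝ) +
        2 * ((dBetween m (S \ R) (R \ S) : ℤ) : ℝ) := by exact_mod_cast hslackZ
  -- squeeze
  push_cast at B1 B2 htSR htRR hslackR hw23R
  have htI : ∑ e ∈ cutEdges ends (S ∩ R), x e = ((k - (degS m (S ∩ R) : ℤ) : ℤ) : ℝ) := by
    push_cast; linarith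
  have htU : ∑ e ∈ cutEdges ends (S ∪ R), x e = ((k - (degS m (S ∪ R) : ℤ) : ℤ) : ℝ) := by
    push_cast; linarith
  have hb0 : ∑ e ∈ betweenEdges ends (S \ R) (R \ S), x e = 0 := by linarith
  -- the between-edge set is empty
  have hbempty : betweenEdges ends (S \ R) (R \ S) = ∅ := by
    rw [Finset.eq_empty_iff_forall_notMem]
    intro e he
    have hz := (Finset.sum_eq_zero_iff_of_nonneg
      (fun e _ => le_of_lt (hxpos e))).mp hb0 e he
    exact absurd hz (ne_of_gt (hxpos e))
  refine ⟨?_, ?_, ?_⟩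
  · rw [IsTight, htI, hfI]
  · rw [IsTight, htU, hfU]
  · funext e
    have hid := ind_identity ends S R e
    rw [hbempty] at hid
    simp only [Finset.notMem_empty, if_false, mul_zero, add_zero] at hid
    simp only [Pi.add_apply, chiCut]
    linarith
end Main2

end GhostAux

namespace GhostAux

section Pert

variable (k : ℤ) (I H : V → V → ℕ) (U : Finset V) (ends : E → V × V)

/-- At an extreme point with all coordinates strictly inside `(0,1)`, the incidence vectors
of tight cuts span the whole space. -/
theorem span_tight_top [Nonempty E] (x : E → ℝ)
    (hx : x ∈ (polyP k I H U ends).extremePoints ℝ)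
    (hxe : ∀ e, 0 < x e ∧ x e < 1) :
    Submodule.span ℝ {v : E → ℝ |
      ∃ S : Finset V, IsCut S ∧ IsTight k I H U ends x S ∧ v = chiCut ends S} = ⊤ := by
  classical
  by_contra hW
  set W : Submodule ℝ (E → ℝ) := Submodule.span ℝ {v : E → ℝ |
      ∃ S : Finset V, IsCut S ∧ IsTight k I H U ends x S ∧ v = chiCut ends S} with hWdef
  have hlt : W < ⊤ := lt_of_le_of_ne le_top hW
  obtain ⟨v, -, hv⟩ := SetLike.exists_of_lt hlt
  have hq : W.mkQ v ≠ 0 := by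
    simpa [Submodule.mkQ_apply, Submodule.Quotient.mk_eq_zero] using hv
  obtain ⟨φ, hφ⟩ : ∃ φ : Module.Dual ℝ ((E → ℝ) ⧸ W), φ (W.mkQ v) ≠ 0 := by
    by_contra hc
    push_neg at hc
    exact hq ((Module.forall_dual_apply_eq_zero_iff ℝ (W.mkQ v)).mp hc)
  set ℓ : (E → ℝ) →ₗ[ℝ] ℝ := φ.comp W.mkQ with hℓdef
  have hℓW : ∀ w ∈ W, ℓ w = 0 := by
    intro w hw
    have hzero : W.mkQ w = 0 := (Submodule.Quotient.mk_eq_zero W).mpr hw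
    simp [hℓdef, LinearMap.comp_apply, hzero]
  have hℓv : ℓ v ≠ 0 := hφ
  set d : E → ℝ := fun e => ℓ (Pi.single e 1) with hddef
  have hrep : ∀ y : E → ℝ, ℓ y = ∑ e : E, y e * d e := by
    intro y
    conv_lhs => rw [← Finset.univ_sum_single y]
    rw [map_sum]
    refine Finset.sum_congr rfl fun e _ => ?_
    have hsingle : Pi.single e (y e) = ((y e) • (Pi.single e (1:ℝ) : E → ℝ) : E → ℝ) := by
      ext b
      by_cases hb : b = e
      · subst hb; simp
      · simp [Pi.single_apply, hb]
    rw [hsingle, map_smul, smul_eq_mul, hddef]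
  have hd0 : d ≠ 0 := by
    intro h
    apply hℓv
    rw [hrep v, h]
    simp
  have hcut0 : ∀ S : Finset V, IsCut S → IsTight k I H U ends x S →
      ∑ e ∈ cutEdges ends S, d e = 0 := by
    intro S hc ht
    have hmem : chiCut ends S ∈ W := Submodule.subset_span ⟨S, hc, ht, rfl⟩
    have h1 : ℓ (chiCut ends S) = 0 := hℓW _ hmem
    rw [hrep] at h1
    have h2 : ∑ e ∈ cutEdges ends S, d e = ∑ e : E, chiCut ends S e * d e := by
      rw [cut_sum_eq]
      refine Finset.sum_congr rfl fun e _ => ?_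
      by_cases he : e ∈ cutEdges ends S <;> simp [chiCut, he]
    rw [h2]
    exact h1
  -- construct a uniform perturbation size ε
  set B1 : Finset ℝ := Finset.univ.image
      (fun e : E => min (x e) (1 - x e) / (|d e| + 1)) with hB1def
  set B2 : Finset ℝ := (Finset.univ.filter (fun S : Finset V => IsCut S)).image (fun S =>
      if (∑ e ∈ cutEdges ends S, d e) = 0 then 1
      else ((∑ e ∈ cutEdges ends S, x e) - (fRes k I H U S : ℝ)) /
        (|∑ e ∈ cutEdges ends S, d e| + 1)) with hB2def
  set B : Finset ℝ := B1 ∪ B2 with hBdef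
  have hBne : B.Nonempty := by
    refine Finset.Nonempty.mono Finset.subset_union_left ?_
    exact Finset.Nonempty.image Finset.univ_nonempty _
  set ε : ℝ := B.min' hBne with hεdef
  have hBpos : ∀ b ∈ B, 0 < b := by
    intro b hb
    rw [hBdef, Finset.mem_union] at hb
    rcases hb with hb | hb
    · rw [hB1def] at hb
      obtain ⟨e, -, rfl⟩ := Finset.mem_image.mp hb
      have h1 := (hxe e).1
      have h2 := (hxe e).2
      have : 0 < min (x e) (1 - x e) := lt_min h1 (by linarith)
      positivity
    · rw [hB2def] at hb
      obtain ⟨S, hS, rfl⟩ := Finset.mem_image.mp hb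
      have hcS : IsCut S := (Finset.mem_filter.mp hS).2
      by_cases h0 : (∑ e ∈ cutEdges ends S, d e) = 0
      · rw [if_pos h0]; norm_num
      · rw [if_neg h0]
        have hfe : (fRes k I H U S : ℝ) ≤ ∑ e ∈ cutEdges ends S, x e := hx.1.2 S hcS
        have hne : ¬ IsTight k I H U ends x S := fun hht => h0 (hcut0 S hcS hht)
        have hstrict : (fRes k I H U S : ℝ) < ∑ e ∈ cutEdges ends S, x e :=
          lt_of_le_of_ne hfe (fun hh => hne hh.symm)
        have : (0:ℝ) < |∑ e ∈ cutEdges ends S, d e| + 1 := by positivity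
        apply div_pos (by linarith) this
  have hε0 : 0 < ε := (Finset.lt_min'_iff B hBne).mpr hBpos
  have hεle : ∀ b ∈ B, ε ≤ b := fun b hb => Finset.min'_le B b hb
  -- perturbed points lie in the polytope
  have hmem : ∀ t : ℝ, |t| ≤ ε → (fun e => x e + t * d e) ∈ polyP k I H U ends := by
    intro t ht
    have htabs : 0 ≤ |t| := abs_nonneg t
    constructor
    · intro e
      show 0 ≤ x e + t * d e ∧ x e + t * d e ≤ 1
      have h1 : ε ≤ min (x e) (1 - x e) / (|d e| + 1) := by
        refine hεle _ ?_
        rw [hBdef]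
        refine Finset.mem_union_left _ ?_
        rw [hB1def]
        exact Finset.mem_image.mpr ⟨e, Finset.mem_univ e, rfl⟩
      have hd1 : (0:ℝ) < |d e| + 1 := by positivity
      have h2 : ε * (|d e| + 1) ≤ min (x e) (1 - x e) := by
        rw [← le_div_iff₀ hd1]; exact h1
      have h3 : |t * d e| ≤ min (x e) (1 - x e) := by
        rw [abs_mul]
        calc |t| * |d e| ≤ ε * |d e| := by
              apply mul_le_mul_of_nonneg_right ht (abs_nonneg _)
          _ ≤ ε * (|d e| + 1) := by nlinarith
          _ ≤ min (x e) (1 - x e) := h2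
      have h4 := abs_le.mp h3
      have h5 : min (x e) (1 - x e) ≤ x e := min_le_left _ _
      have h6 : min (x e) (1 - x e) ≤ 1 - x e := min_le_right _ _
      constructor <;> nlinarith [h4.1, h4.2, h5, h6]
    · intro S hcS
      show (fRes k I H U S : ℝ) ≤ ∑ e ∈ cutEdges ends S, (x e + t * d e)
      have hsum : ∑ e ∈ cutEdges ends S, (x e + t * d e) =
          (∑ e ∈ cutEdges ends S, x e) + t * ∑ e ∈ cutEdges ends S, d e := by
        rw [Finset.sum_add_distrib, Finset.mul_sum]
      rw [hsum]
      by_cases h0 : (∑ e ∈ cutEdges ends S, d e) = 0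
      · rw [h0, mul_zero, add_zero]
        exact hx.1.2 S hcS
      · have h1 : ε ≤ ((∑ e ∈ cutEdges ends S, x e) - (fRes k I H U S : ℝ)) /
            (|∑ e ∈ cutEdges ends S, d e| + 1) := by
          refine hεle _ ?_
          rw [hBdef]
          refine Finset.mem_union_right _ ?_
          rw [hB2def]
          refine Finset.mem_image.mpr ⟨S, Finset.mem_filter.mpr ⟨Finset.mem_univ S, hcS⟩, ?_⟩
          rw [if_neg h0]
        have hd1 : (0:ℝ) < |∑ e ∈ cutEdges ends S, d e| + 1 := by positivity
        have h2 : ε * (|∑ e ∈ cutEdges ends S, d e| + 1) ≤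
            (∑ e ∈ cutEdges ends S, x e) - (fRes k I H U S : ℝ) := by
          rw [← le_div_iff₀ hd1]; exact h1
        have h3 : |t * ∑ e ∈ cutEdges ends S, d e| ≤
            (∑ e ∈ cutEdges ends S, x e) - (fRes k I H U S : ℝ) := by
          rw [abs_mul]
          calc |t| * |∑ e ∈ cutEdges ends S, d e| ≤ ε * |∑ e ∈ cutEdges ends S, d e| :=
                mul_le_mul_of_nonneg_right ht (abs_nonneg _)
            _ ≤ ε * (|∑ e ∈ cutEdges ends S, d e| + 1) := by nlinarith
            _ ≤ _ := h2
        have h4 := (abs_le.mp h3).1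
        linarith
  have hy1 : (fun e => x e + (-ε) * d e) ∈ polyP k I H U ends := by
    refine hmem (-ε) ?_
    rw [abs_neg, abs_of_pos hε0]
  have hy2 : (fun e => x e + ε * d e) ∈ polyP k I H U ends := by
    refine hmem ε ?_
    rw [abs_of_pos hε0]
  have hseg : x ∈ openSegment ℝ (fun e => x e + (-ε) * d e) (fun e => x e + ε * d e) := by
    refine ⟨1/2, 1/2, by norm_num, by norm_num, by norm_num, ?_⟩
    funext e
    simp only [Pi.add_apply, Pi.smul_apply, smul_eq_mul]
    ring
  have hfix := (hx.2 hy1 hy2 hseg)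
  apply hd0
  funext e
  have hfe := congrFun hfix e
  change x e + -ε * d e = x e at hfe
  have : ε * d e = 0 := by linarith [hfe]
  have := mul_eq_zero.mp this
  rcases this with h | h
  · exact absurd h (ne_of_gt hε0)
  · simpa using h

end Pert

end GhostAux

namespace GhostAux

theorem chiCut_compl (ends : E → V × V) (S : Finset V) :
    chiCut ends Sᶜ = chiCut ends S := by
  unfold chiCut; rw [cutEdges_compl]

theorem range_chi_eq (ends : E → V × V) (L : Finset (Finset V)) :
    Set.range (fun A : {A : Finset V // A ∈ L} => chiCut ends A.1) =
      chiCut ends '' (L : Set (Finset V)) := by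
  ext v
  constructor
  · rintro ⟨⟨a, ha⟩, rfl⟩
    exact ⟨a, by simpa using ha, rfl⟩
  · rintro ⟨a, ha, rfl⟩
    exact ⟨⟨a, by simpa using ha⟩, rfl⟩

theorem chi_zero_of_nonpos (k : ℤ) (I H : V → V → ℕ) (U : Finset V) (ends : E → V × V)
    (x : E → ℝ) (hxpos : ∀ e, 0 < x e) {S : Finset V}
    (ht : IsTight k I H U ends x S) (hnp : ¬ 0 < fRes k I H U S) :
    chiCut ends S = 0 := by
  have h1 : (fRes k I H U S : ℝ) ≤ 0 := by
    have : fRes k I H U S ≤ 0 := not_lt.mp hnp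
    exact_mod_cast this
  have h2 : (0:ℝ) ≤ ∑ e ∈ cutEdges ends S, x e :=
    Finset.sum_nonneg fun e _ => le_of_lt (hxpos e)
  have h3 : ∑ e ∈ cutEdges ends S, x e = 0 := le_antisymm (by rw [ht]; exact h1) h2
  have h4 : cutEdges ends S = ∅ := by
    rw [Finset.eq_empty_iff_forall_notMem]
    intro e he
    have hz := (Finset.sum_eq_zero_iff_of_nonneg (fun e _ => le_of_lt (hxpos e))).mp h3 e he
    exact absurd hz (ne_of_gt (hxpos e))
  funext e
  simp [chiCut, h4]

end GhostAux

open GhostAux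

/-- Lemma 4.2: under the assumptions of the main lemma, if no laminar `x`-defining family
exists, then there are distinct `u, v ∈ U` with `d_I(u,v) ≥ μ` and `d_H(u,v) = 0`. -/
theorem no_laminar_defining_family_gives_ghost_pair
    (k : ℤ) (μ : ℤ) (hμ : μ = ⌈((k : ℚ) - 3) / 2⌉)
    (I H : V → V → ℕ)
    (hIsymm : ∀ a b, I a b = I b a) (hHsymm : ∀ a b, H a b = H b a)
    (U : Finset V) (ends : E → V × V) [Nonempty E]
    (hU1 : ∀ u ∈ U, degS H {u} ≤ 1)
    (hU2 : ∀ u ∈ U, k - 2 ≤ (degS I {u} : ℤ) + 2 * (degS H {u} : ℤ))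
    (hIH : ∀ u v : V, 1 ≤ H u v → μ ≤ (I u v : ℤ))
    (x : E → ℝ) (hx : x ∈ (polyP k I H U ends).extremePoints ℝ)
    (hxe : ∀ e, 0 < x e ∧ x e < 1)
    (hnolam : ¬ ∃ L : Finset (Finset V), LaminarF L ∧ IsDefining k I H U ends x L) :
    ∃ u ∈ U, ∃ v ∈ U, u ≠ v ∧ μ ≤ (I u v : ℤ) ∧ H u v = 0 := by
  classical
  by_contra hng0
  push_neg at hng0
  have hng : ∀ u ∈ U, ∀ v ∈ U, u ≠ v → μ ≤ (I u v : ℤ) → H u v ≠ 0 := hng0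
  have hxpos : ∀ e, 0 < x e := fun e => (hxe e).1
  -- bounds on μ
  have hμ1 : k - 3 ≤ 2 * μ := by
    have h1 : ((k : ℚ) - 3) / 2 ≤ (μ : ℚ) := by rw [hμ]; exact Int.le_ceil _
    have h2 : (k : ℚ) - 3 ≤ 2 * μ := by linarith
    exact_mod_cast h2
  have hμ2 : 2 * μ ≤ k - 2 := by
    have h1 : (μ : ℚ) < ((k : ℚ) - 3) / 2 + 1 := by rw [hμ]; exact Int.ceil_lt_add_one _
    have h2 : 2 * (μ : ℚ) < (k : ℚ) - 1 := by linarith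
    have h3 : 2 * μ < k - 1 := by exact_mod_cast h2
    omega
  -- helpers
  have heavyPair : ∀ (y z : V), y ∈ U → z ∈ U → y ≠ z →
      ((degS I ({y, z} : Finset V) : ℤ) + 2 * (degS H ({y, z} : Finset V) : ℤ) ≤ k - 1) →
      1 ≤ H y z ∧ μ + 2 ≤ (I y z : ℤ) + 2 * (H y z : ℤ) := fun y z hy hz hyz hM =>
    pair_heavy I H U hIH hng hy hz hyz (pigeon_mu k I H U hμ2 hIsymm hHsymm hU2 hy hz hyz hM)
  have sig_le : ∀ X : Finset V, 0 < fRes k I H U X →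
      (¬∃ w ∈ U, X = {w} ∨ Xᶜ = {w}) →
      (degS I X : ℤ) + 2 * (degS H X : ℤ) ≤ k - 1 := by
    intro X hpos hnx
    rw [fRes_of_noexc hnx] at hpos
    omega
  -- the span of tight cuts is everything
  have htop := span_tight_top k I H U ends x hx hxe
  -- the finset of positive tight cuts
  set TP : Finset (Finset V) := Finset.univ.filter
    (fun S => IsCut S ∧ 0 < fRes k I H U S ∧ IsTight k I H U ends x S) with hTPdef
  have hTPtop : Submodule.span ℝ (chiCut ends '' (TP : Set (Finset V))) = ⊤ := by
    rw [← top_le_iff, ← htop]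
    refine Submodule.span_le.mpr ?_
    rintro v ⟨S, hcS, htS, rfl⟩
    by_cases hpos : 0 < fRes k I H U S
    · exact Submodule.subset_span ⟨S, by simp [hTPdef, hcS, hpos, htS], rfl⟩
    · rw [chi_zero_of_nonpos k I H U ends x hxpos htS hpos]
      exact Submodule.zero_mem _
  -- a maximum-cardinality laminar independent family of positive tight cuts
  set goodF : Finset (Finset V) → Prop := fun L =>
    (∀ S ∈ L, IsCut S ∧ 0 < fRes k I H U S ∧ IsTight k I H U ends x S) ∧
    LaminarF L ∧
    LinearIndependent ℝ (fun A : {A : Finset V // A ∈ L} => chiCut ends A.1) with hgooddef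
  set 𝒞 : Finset (Finset (Finset V)) := Finset.univ.filter goodF with h𝒞def
  have h𝒞ne : 𝒞.Nonempty := by
    refine ⟨∅, ?_⟩
    rw [h𝒞def, Finset.mem_filter]
    refine ⟨Finset.mem_univ _, ?_, ?_, ?_⟩
    · intro S hS; exact absurd hS (Finset.notMem_empty S)
    · intro A hA; exact absurd hA (Finset.notMem_empty A)
    · have : IsEmpty {A : Finset V // A ∈ (∅ : Finset (Finset V))} :=
        ⟨fun a => Finset.notMem_empty _ a.2⟩
      exact linearIndependent_empty_type
  obtain ⟨L, hL𝒞, hLmax⟩ := Finset.exists_max_image 𝒞 Finset.card h𝒞ne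
  have hLgood : goodF L := (Finset.mem_filter.mp hL𝒞).2
  obtain ⟨hLP0, hLlam, hLind⟩ := hLgood
  set spanL : Submodule ℝ (E → ℝ) :=
    Submodule.span ℝ (chiCut ends '' (L : Set (Finset V))) with hspanLdef
  by_cases hspan : spanL = ⊤
  · -- L is a laminar defining family: contradiction with hnolam
    refine absurd ?_ hnolam
    refine ⟨L, hLlam, hLP0, ?_, hLind⟩
    have hb : Submodule.span ℝ (Set.range
        (fun A : {A : Finset V // A ∈ L} => chiCut ends A.1)) = ⊤ := by
      rw [range_chi_eq]; exact hspan
    let b : Module.Basis {A : Finset V // A ∈ L} ℝ (E → ℝ) := Module.Basis.mk hLind (le_of_eq hb.symm)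
    have hcard := Module.finrank_eq_card_basis b
    rw [Module.finrank_fintype_fun_eq_card, Fintype.card_coe] at hcard
    exact hcard.symm
  · -- pick a positive tight cut whose incidence vector is not in the span, with
    -- fewest crossings with L
    have hCandne : ∃ S ∈ TP, chiCut ends S ∉ spanL := by
      by_contra hc
      push_neg at hc
      apply hspan
      rw [← top_le_iff, ← hTPtop]
      refine Submodule.span_le.mpr ?_
      rintro v ⟨S, hS, rfl⟩
      exact hc S (by simpa using hS)
    obtain ⟨S0, hS0TP, hS0span⟩ := hCandne
    set Cand : Finset (Finset V) := TP.filter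
      (fun S => chiCut ends S ∉ spanL) with hCanddef
    have hCandne' : Cand.Nonempty := ⟨S0, by rw [hCanddef, Finset.mem_filter]; exact ⟨hS0TP, hS0span⟩⟩
    obtain ⟨S, hSC, hSmin⟩ := Finset.exists_min_image Cand
      (fun S => (L.filter (fun T => Crosses S T)).card) hCandne'
    have hSTP := (Finset.mem_filter.mp hSC).1
    have hSspan : chiCut ends S ∉ spanL := (Finset.mem_filter.mp hSC).2
    obtain ⟨-, hcS, hposS, htS⟩ := Finset.mem_filter.mp hSTP
    -- the "finish" move: any positive tight replacement with fewer crossings and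
    -- χ ∉ span yields a contradiction with minimality of S
    have finish : ∀ X : Finset V, IsCut X → IsTight k I H U ends x X →
        chiCut ends X ∉ spanL →
        (L.filter (fun T => Crosses X T)).card < (L.filter (fun T => Crosses S T)).card →
        False := by
      intro X hcX htX hXspan hlt
      by_cases hposX : 0 < fRes k I H U X
      · have hXC : X ∈ Cand := by
          rw [hCanddef, Finset.mem_filter]
          exact ⟨by simp [hTPdef, hcX, hposX, htX], hXspan⟩
        exact absurd (hSmin X hXC) (not_le.mpr hlt)
      · exact hXspan (by
          rw [chi_zero_of_nonpos k I H U ends x hxpos htX hposX]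
          exact Submodule.zero_mem _)

  -- ====== main case analysis ======
    by_cases hcross : ∃ R ∈ L, Crosses S R
    · obtain ⟨R, hRL, hSR⟩ := hcross
      obtain ⟨hcR, hposR, htR⟩ := hLP0 R hRL
      -- crossing-count decrease helper
      have ncross_lt : ∀ X : Finset V, (Crosses X R → False) →
          (∀ T, (Disjoint T R ∨ T ⊆ R ∨ R ⊆ T) → Crosses X T → Crosses S T) →
          (L.filter (fun T => Crosses X T)).card <
            (L.filter (fun T => Crosses S T)).card := by
        intro X hXR htrans
        have hsub : L.filter (fun T => Crosses X T) ⊆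
            (L.filter (fun T => Crosses S T)).erase R := by
          intro T hT
          obtain ⟨hTL, hXT⟩ := Finset.mem_filter.mp hT
          have hTR := hLlam T hTL R hRL
          refine Finset.mem_erase.mpr ⟨?_, Finset.mem_filter.mpr ⟨hTL, htrans T hTR hXT⟩⟩
          rintro rfl; exact hXR hXT
        calc (L.filter (fun T => Crosses X T)).card
            ≤ ((L.filter (fun T => Crosses S T)).erase R).card := Finset.card_le_card hsub
          _ < (L.filter (fun T => Crosses S T)).card :=
              Finset.card_erase_lt_of_mem (Finset.mem_filter.mpr ⟨hRL, hSR⟩)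
      -- corners
      have hP1ne : (S ∩ R).Nonempty := by
        obtain ⟨a, h1, h2⟩ := Finset.not_disjoint_iff.mp hSR.1
        exact ⟨a, Finset.mem_inter.mpr ⟨h1, h2⟩⟩
      have hP2ne : (S \ R).Nonempty := by
        obtain ⟨a, h1, h2⟩ := Finset.not_subset.mp hSR.2.1
        exact ⟨a, Finset.mem_sdiff.mpr ⟨h1, h2⟩⟩
      have hP3ne : (R \ S).Nonempty := by
        obtain ⟨a, h1, h2⟩ := Finset.not_subset.mp hSR.2.2
        exact ⟨a, Finset.mem_sdiff.mpr ⟨h1, h2⟩⟩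
      have hchiR : chiCut ends R ∈ spanL :=
        Submodule.subset_span ⟨R, by simpa using hRL, rfl⟩
      by_cases hP4 : ((S ∪ R)ᶜ).Nonempty
      · -- ===== main (four-corner) case =====
        -- no-exception facts for S and R
        have hsub3Sc : R \ S ⊆ Sᶜ := fun a ha =>
          Finset.mem_compl.mpr (Finset.mem_sdiff.mp ha).2
        have hsub4Sc : (S ∪ R)ᶜ ⊆ Sᶜ := fun a ha =>
          Finset.mem_compl.mpr fun h => Finset.mem_compl.mp ha (Finset.mem_union_left _ h)
        have hsub2Rc : S \ R ⊆ Rᶜ := fun a ha =>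
          Finset.mem_compl.mpr (Finset.mem_sdiff.mp ha).2
        have hsub4Rc : (S ∪ R)ᶜ ⊆ Rᶜ := fun a ha =>
          Finset.mem_compl.mpr fun h => Finset.mem_compl.mp ha (Finset.mem_union_right _ h)
        have hnxS : ¬∃ w ∈ U, S = {w} ∨ Sᶜ = {w} :=
          noexc_of_cards
            (two_le_card_of Finset.inter_subset_left Finset.sdiff_subset hP1ne hP2ne (d12 S R))
            (two_le_card_of hsub3Sc hsub4Sc hP3ne hP4 (d34 S R))
        have hnxR : ¬∃ w ∈ U, R = {w} ∨ Rᶜ = {w} :=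
          noexc_of_cards
            (two_le_card_of Finset.inter_subset_right Finset.sdiff_subset hP1ne hP3ne (d13 S R))
            (two_le_card_of hsub2Rc hsub4Rc hP2ne hP4 (d24 S R))
        have hσS_le := sig_le S hposS hnxS
        have hσR_le := sig_le R hposR hnxR
        -- the four singleton flags
        set F1 : Prop := ∃ w ∈ U, S ∩ R = {w} with hF1def
        set F2 : Prop := ∃ w ∈ U, S \ R = {w} with hF2def
        set F3 : Prop := ∃ w ∈ U, R \ S = {w} with hF3def
        set F4 : Prop := ∃ w ∈ U, (S ∪ R)ᶜ = {w} with hF4def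
        -- helper: σ-bounds transported to the two-element representations
        have hMS : ∀ {y z : V}, S = ({y, z} : Finset V) →
            (degS I ({y, z} : Finset V) : ℤ) + 2 * (degS H ({y, z} : Finset V) : ℤ) ≤ k - 1 :=
          fun h => h ▸ hσS_le
        have hMR : ∀ {y z : V}, R = ({y, z} : Finset V) →
            (degS I ({y, z} : Finset V) : ℤ) + 2 * (degS H ({y, z} : Finset V) : ℤ) ≤ k - 1 :=
          fun h => h ▸ hσR_le
        have hMSc : ∀ {y z : V}, Sᶜ = ({y, z} : Finset V) →
            (degS I ({y, z} : Finset V) : ℤ) + 2 * (degS H ({y, z} : Finset V) : ℤ) ≤ k - 1 := by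
          intro y z h
          have h' : (degS I Sᶜ : ℤ) + 2 * (degS H Sᶜ : ℤ) ≤ k - 1 := by
            rw [degS_compl hIsymm, degS_compl hHsymm]; exact hσS_le
          rwa [h] at h'
        have hMRc : ∀ {y z : V}, Rᶜ = ({y, z} : Finset V) →
            (degS I ({y, z} : Finset V) : ℤ) + 2 * (degS H ({y, z} : Finset V) : ℤ) ≤ k - 1 := by
          intro y z h
          have h' : (degS I Rᶜ : ℤ) + 2 * (degS H Rᶜ : ℤ) ≤ k - 1 := by
            rw [degS_compl hIsymm, degS_compl hHsymm]; exact hσR_le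
          rwa [h] at h'
        -- ==== the dichotomy ====
        have hFalseCase : (F1 ∨ F4) → (F2 ∨ F3) → False := by
          rintro (⟨u, hu, he1⟩ | ⟨w, hw, he4⟩) (⟨p, hp, he2⟩ | ⟨q, hq, he3⟩)
          · -- F1 & F2 : pair (u, p) inside S
            have hup : u ≠ p := by
              rintro rfl
              exact Finset.disjoint_left.mp (d12 S R)
                (he1 ▸ Finset.mem_singleton_self u) (he2 ▸ Finset.mem_singleton_self u)
            have hSeq : S = ({u, p} : Finset V) := by
              rw [eqS S R, he1, he2, ← Finset.insert_eq]
            obtain ⟨hH1, hbig1⟩ := heavyPair u p hu hp hup (hMS hSeq)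
            by_cases hf3 : F3
            · obtain ⟨q, hq, he3⟩ := hf3
              have huq : u ≠ q := by
                rintro rfl
                exact Finset.disjoint_left.mp (d13 S R)
                  (he1 ▸ Finset.mem_singleton_self u) (he3 ▸ Finset.mem_singleton_self u)
              have hReq : R = ({u, q} : Finset V) := by
                rw [eqR S R, he1, he3, ← Finset.insert_eq]
              obtain ⟨hH2, -⟩ := heavyPair u q hu hq huq (hMR hReq)
              have hpq : p ≠ q := by
                rintro rfl
                exact Finset.disjoint_left.mp (d23 S R)
                  (he2 ▸ Finset.mem_singleton_self p) (he3 ▸ Finset.mem_singleton_self p)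
              exact two_H_edges H U hU1 hu hH1 hH2 (by first | assumption | exact Ne.symm (by assumption)) (by first | assumption | exact Ne.symm (by assumption)) (by first | assumption | exact Ne.symm (by assumption))
            by_cases hf4 : F4
            · obtain ⟨w, hw, he4⟩ := hf4
              have hpw : p ≠ w := by
                rintro rfl
                exact Finset.disjoint_left.mp (d24 S R)
                  (he2 ▸ Finset.mem_singleton_self p) (he4 ▸ Finset.mem_singleton_self p)
              have hRceq : Rᶜ = ({p, w} : Finset V) := by
                rw [eqRc S R, he2, he4, ← Finset.insert_eq]
              obtain ⟨hH2, -⟩ := heavyPair p w hp hw hpw (hMRc hRceq)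
              have hH1' : 1 ≤ H p u := by rw [hHsymm]; exact hH1
              have huw : u ≠ w := by
                rintro rfl
                exact Finset.disjoint_left.mp (d14 S R)
                  (he1 ▸ Finset.mem_singleton_self u) (he4 ▸ Finset.mem_singleton_self u)
              exact two_H_edges H U hU1 hp hH1' hH2 (by first | assumption | exact Ne.symm (by assumption)) (by first | assumption | exact Ne.symm (by assumption)) (by first | assumption | exact Ne.symm (by assumption))
            · -- core on (R, S)
              refine core_contradiction k I H U ends x hIsymm hHsymm hμ1 hx.1 htR htS hu
                (by rw [Finset.inter_comm]; exact he1) hP3ne hP2ne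
                (by rw [Finset.union_comm]; exact hP4) hf3
                (by rw [Finset.union_comm]; exact hf4) ?_
              rw [Finset.inter_comm, he1, he2, dB_singleton]
              push_cast
              exact hbig1
          · -- F1 & F3 : pair (u, q) inside R
            have huq : u ≠ q := by
              rintro rfl
              exact Finset.disjoint_left.mp (d13 S R)
                (he1 ▸ Finset.mem_singleton_self u) (he3 ▸ Finset.mem_singleton_self u)
            have hReq : R = ({u, q} : Finset V) := by
              rw [eqR S R, he1, he3, ← Finset.insert_eq]
            obtain ⟨hH1, hbig1⟩ := heavyPair u q hu hq huq (hMR hReq)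
            by_cases hf2 : F2
            · obtain ⟨p, hp, he2⟩ := hf2
              have hup : u ≠ p := by
                rintro rfl
                exact Finset.disjoint_left.mp (d12 S R)
                  (he1 ▸ Finset.mem_singleton_self u) (he2 ▸ Finset.mem_singleton_self u)
              have hSeq : S = ({u, p} : Finset V) := by
                rw [eqS S R, he1, he2, ← Finset.insert_eq]
              obtain ⟨hH2, -⟩ := heavyPair u p hu hp hup (hMS hSeq)
              have hqp : q ≠ p := by
                rintro rfl
                exact Finset.disjoint_left.mp (d23 S R)
                  (he2 ▸ Finset.mem_singleton_self q) (he3 ▸ Finset.mem_singleton_self q)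
              exact two_H_edges H U hU1 hu hH1 hH2 (by first | assumption | exact Ne.symm (by assumption)) (by first | assumption | exact Ne.symm (by assumption)) (by first | assumption | exact Ne.symm (by assumption))
            by_cases hf4 : F4
            · obtain ⟨w, hw, he4⟩ := hf4
              have hqw : q ≠ w := by
                rintro rfl
                exact Finset.disjoint_left.mp (d34 S R)
                  (he3 ▸ Finset.mem_singleton_self q) (he4 ▸ Finset.mem_singleton_self q)
              have hSceq : Sᶜ = ({q, w} : Finset V) := by
                rw [eqSc S R, he3, he4, ← Finset.insert_eq]
              obtain ⟨hH2, -⟩ := heavyPair q w hq hw hqw (hMSc hSceq)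
              have hH1' : 1 ≤ H q u := by rw [hHsymm]; exact hH1
              have huw : u ≠ w := by
                rintro rfl
                exact Finset.disjoint_left.mp (d14 S R)
                  (he1 ▸ Finset.mem_singleton_self u) (he4 ▸ Finset.mem_singleton_self u)
              exact two_H_edges H U hU1 hq hH1' hH2 (by first | assumption | exact Ne.symm (by assumption)) (by first | assumption | exact Ne.symm (by assumption)) (by first | assumption | exact Ne.symm (by assumption))
            · -- core on (S, R)
              refine core_contradiction k I H U ends x hIsymm hHsymm hμ1 hx.1 htS htR hu
                he1 hP2ne hP3ne hP4 hf2 hf4 ?_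
              rw [he1, he3, dB_singleton]
              push_cast
              exact hbig1
          · -- F4 & F2 : pair (p, w) inside Rᶜ
            have hpw : p ≠ w := by
              rintro rfl
              exact Finset.disjoint_left.mp (d24 S R)
                (he2 ▸ Finset.mem_singleton_self p) (he4 ▸ Finset.mem_singleton_self p)
            have hRceq : Rᶜ = ({p, w} : Finset V) := by
              rw [eqRc S R, he2, he4, ← Finset.insert_eq]
            obtain ⟨hH1, hbig1⟩ := heavyPair p w hp hw hpw (hMRc hRceq)
            by_cases hf1 : F1
            · obtain ⟨u, hu, he1⟩ := hf1
              have hup : u ≠ p := by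
                rintro rfl
                exact Finset.disjoint_left.mp (d12 S R)
                  (he1 ▸ Finset.mem_singleton_self u) (he2 ▸ Finset.mem_singleton_self u)
              have hSeq : S = ({u, p} : Finset V) := by
                rw [eqS S R, he1, he2, ← Finset.insert_eq]
              obtain ⟨hH2, -⟩ := heavyPair u p hu hp hup (hMS hSeq)
              have hH2' : 1 ≤ H p u := by rw [hHsymm]; exact hH2
              have huw : u ≠ w := by
                rintro rfl
                exact Finset.disjoint_left.mp (d14 S R)
                  (he1 ▸ Finset.mem_singleton_self u) (he4 ▸ Finset.mem_singleton_self u)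
              exact two_H_edges H U hU1 hp hH2' hH1 (by first | assumption | exact Ne.symm (by assumption)) (by first | assumption | exact Ne.symm (by assumption)) (by first | assumption | exact Ne.symm (by assumption))
            by_cases hf3 : F3
            · obtain ⟨q, hq, he3⟩ := hf3
              have hqw : q ≠ w := by
                rintro rfl
                exact Finset.disjoint_left.mp (d34 S R)
                  (he3 ▸ Finset.mem_singleton_self q) (he4 ▸ Finset.mem_singleton_self q)
              have hSceq : Sᶜ = ({q, w} : Finset V) := by
                rw [eqSc S R, he3, he4, ← Finset.insert_eq]
              obtain ⟨hH2, -⟩ := heavyPair q w hq hw hqw (hMSc hSceq)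
              have hH1' : 1 ≤ H w p := by rw [hHsymm]; exact hH1
              have hH2' : 1 ≤ H w q := by rw [hHsymm]; exact hH2
              have hpq : p ≠ q := by
                rintro rfl
                exact Finset.disjoint_left.mp (d23 S R)
                  (he2 ▸ Finset.mem_singleton_self p) (he3 ▸ Finset.mem_singleton_self p)
              exact two_H_edges H U hU1 hw hH1' hH2' (by first | assumption | exact Ne.symm (by assumption)) (by first | assumption | exact Ne.symm (by assumption)) (by first | assumption | exact Ne.symm (by assumption))
            · -- core on (Sᶜ, Rᶜ)
              refine core_contradiction k I H U ends x hIsymm hHsymm hμ1 hx.1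
                (isTight_compl hIsymm hHsymm htS) (isTight_compl hIsymm hHsymm htR) hw
                (by rw [ceE S R]; exact he4) (by rw [ceF S R]; exact hP3ne) (by rw [ceG S R]; exact hP2ne)
                (by rw [ceH S R]; exact hP1ne) (by rw [ceF S R]; exact hf3) (by rw [ceH S R]; exact hf1) ?_
              rw [ceE S R, ceG S R, he4, he2, dB_singleton]
              push_cast
              have : (I w p : ℤ) + 2 * (H w p : ℤ) = (I p w : ℤ) + 2 * (H p w : ℤ) := by
                rw [hIsymm, hHsymm]
              rw [this]
              exact hbig1
          · -- F4 & F3 : pair (q, w) inside Sᶜ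
            have hqw : q ≠ w := by
              rintro rfl
              exact Finset.disjoint_left.mp (d34 S R)
                (he3 ▸ Finset.mem_singleton_self q) (he4 ▸ Finset.mem_singleton_self q)
            have hSceq : Sᶜ = ({q, w} : Finset V) := by
              rw [eqSc S R, he3, he4, ← Finset.insert_eq]
            obtain ⟨hH1, hbig1⟩ := heavyPair q w hq hw hqw (hMSc hSceq)
            by_cases hf1 : F1
            · obtain ⟨u, hu, he1⟩ := hf1
              have huq : u ≠ q := by
                rintro rfl
                exact Finset.disjoint_left.mp (d13 S R)
                  (he1 ▸ Finset.mem_singleton_self u) (he3 ▸ Finset.mem_singleton_self u)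
              have hReq : R = ({u, q} : Finset V) := by
                rw [eqR S R, he1, he3, ← Finset.insert_eq]
              obtain ⟨hH2, -⟩ := heavyPair u q hu hq huq (hMR hReq)
              have hH2' : 1 ≤ H q u := by rw [hHsymm]; exact hH2
              have huw : u ≠ w := by
                rintro rfl
                exact Finset.disjoint_left.mp (d14 S R)
                  (he1 ▸ Finset.mem_singleton_self u) (he4 ▸ Finset.mem_singleton_self u)
              exact two_H_edges H U hU1 hq hH2' hH1 (by first | assumption | exact Ne.symm (by assumption)) (by first | assumption | exact Ne.symm (by assumption)) (by first | assumption | exact Ne.symm (by assumption))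
            by_cases hf2 : F2
            · obtain ⟨p, hp, he2⟩ := hf2
              have hpw : p ≠ w := by
                rintro rfl
                exact Finset.disjoint_left.mp (d24 S R)
                  (he2 ▸ Finset.mem_singleton_self p) (he4 ▸ Finset.mem_singleton_self p)
              have hRceq : Rᶜ = ({p, w} : Finset V) := by
                rw [eqRc S R, he2, he4, ← Finset.insert_eq]
              obtain ⟨hH2, -⟩ := heavyPair p w hp hw hpw (hMRc hRceq)
              have hH1' : 1 ≤ H w q := by rw [hHsymm]; exact hH1
              have hH2' : 1 ≤ H w p := by rw [hHsymm]; exact hH2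
              have hpq : p ≠ q := by
                rintro rfl
                exact Finset.disjoint_left.mp (d23 S R)
                  (he2 ▸ Finset.mem_singleton_self p) (he3 ▸ Finset.mem_singleton_self p)
              exact two_H_edges H U hU1 hw hH2' hH1' (by first | assumption | exact Ne.symm (by assumption)) (by first | assumption | exact Ne.symm (by assumption)) (by first | assumption | exact Ne.symm (by assumption))
            · -- core on (Rᶜ, Sᶜ)
              refine core_contradiction k I H U ends x hIsymm hHsymm hμ1 hx.1
                (isTight_compl hIsymm hHsymm htR) (isTight_compl hIsymm hHsymm htS) hw
                (by rw [ceJ S R]; exact he4) (by rw [ceG S R]; exact hP2ne) (by rw [ceF S R]; exact hP3ne)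
                (by rw [ceI2 S R]; exact hP1ne) (by rw [ceG S R]; exact hf2) (by rw [ceI2 S R]; exact hf1) ?_
              rw [ceJ S R, ceF S R, he4, he3, dB_singleton]
              push_cast
              have : (I w q : ℤ) + 2 * (H w q : ℤ) = (I q w : ℤ) + 2 * (H q w : ℤ) := by
                rw [hIsymm, hHsymm]
              rw [this]
              exact hbig1
        have hAB : (¬F1 ∧ ¬F4) ∨ (¬F2 ∧ ¬F3) := by
          by_cases f1 : F1
          · by_cases f2 : F2
            · exact (hFalseCase (Or.inl f1) (Or.inl f2)).elim
            · by_cases f3 : F3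
              · exact (hFalseCase (Or.inl f1) (Or.inr f3)).elim
              · exact Or.inr ⟨f2, f3⟩
          · by_cases f4 : F4
            · by_cases f2 : F2
              · exact (hFalseCase (Or.inr f4) (Or.inl f2)).elim
              · by_cases f3 : F3
                · exact (hFalseCase (Or.inr f4) (Or.inr f3)).elim
                · exact Or.inr ⟨f2, f3⟩
            · exact Or.inl ⟨f1, f4⟩
        obtain ⟨aP4, haP4⟩ := id hP4
        obtain ⟨aP1, haP1⟩ := id hP1ne
        rcases hAB with ⟨hnf1, hnf4⟩ | ⟨hnf2, hnf3⟩
        · -- uncross into S ∩ R, S ∪ R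
          obtain ⟨htI', htU', hchi⟩ := uncross_tight k I H U ends x hIsymm hHsymm hx.1 hxpos
            htS htR hP1ne hP2ne hP3ne hP4 hnf1 hnf4
          have hcI : IsCut (S ∩ R) :=
            isCut_of_nonempty_of_notmem hP1ne (a := aP4)
              (fun hh => (Finset.mem_compl.mp haP4)
                (Finset.mem_union_left _ (Finset.mem_inter.mp hh).1))
          have hcU : IsCut (S ∪ R) :=
            isCut_of_nonempty_of_notmem
              (hP1ne.mono (Finset.inter_subset_left.trans Finset.subset_union_left))
              (a := aP4) (Finset.mem_compl.mp haP4)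
          by_cases hIin : chiCut ends (S ∩ R) ∈ spanL
          · have hUnot : chiCut ends (S ∪ R) ∉ spanL := by
              intro hUin
              apply hSspan
              have hSeqchi : chiCut ends S =
                  chiCut ends (S ∩ R) + chiCut ends (S ∪ R) - chiCut ends R := by
                rw [← hchi]; abel
              rw [hSeqchi]
              exact Submodule.sub_mem _ (Submodule.add_mem _ hIin hUin) hchiR
            exact finish (S ∪ R) hcU htU' hUnot
              (ncross_lt (S ∪ R) not_crosses_union (fun T hTR hXT => cl_union hSR hTR hXT))
          · exact finish (S ∩ R) hcI htI' hIin
              (ncross_lt (S ∩ R) not_crosses_inter (fun T hTR hXT => cl_inter hSR hTR hXT))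
        · -- uncross (Sᶜ, R) into R \ S and (S \ R)ᶜ
          obtain ⟨htI', htU', hchi⟩ := uncross_tight k I H U ends x hIsymm hHsymm hx.1 hxpos
            (isTight_compl hIsymm hHsymm htS) htR
            (by rw [ceA S R]; exact hP3ne) (by rw [ceB S R]; exact hP4)
            (by rw [ceC S R]; exact hP1ne) (by rw [ceD S R]; exact hP2ne)
            (by rw [ceA S R]; exact hnf3) (by rw [ceD S R]; exact hnf2)
          rw [ceA S R] at htI'
          have e5 : (S \ R)ᶜ = Sᶜ ∪ R := by rw [← ceD S R, compl_compl]
          have htD : IsTight k I H U ends x (S \ R) := by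
            have h' := isTight_compl hIsymm hHsymm (S := Sᶜ ∪ R) htU'
            rwa [← e5, compl_compl] at h'
          have hchi' : chiCut ends S + chiCut ends R =
              chiCut ends (R \ S) + chiCut ends (S \ R) := by
            rw [chiCut_compl, ceA S R, ← e5, chiCut_compl] at hchi
            exact hchi
          have hcRS : IsCut (R \ S) :=
            isCut_of_nonempty_of_notmem hP3ne (a := aP1)
              (fun hh => (Finset.mem_sdiff.mp hh).2 (Finset.mem_inter.mp haP1).1)
          have hcSD : IsCut (S \ R) :=
            isCut_of_nonempty_of_notmem hP2ne (a := aP1)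
              (fun hh => (Finset.mem_sdiff.mp hh).2 (Finset.mem_inter.mp haP1).2)
          by_cases hIin : chiCut ends (R \ S) ∈ spanL
          · have hUnot : chiCut ends (S \ R) ∉ spanL := by
              intro hUin
              apply hSspan
              have hSeqchi : chiCut ends S =
                  chiCut ends (R \ S) + chiCut ends (S \ R) - chiCut ends R := by
                rw [← hchi']; abel
              rw [hSeqchi]
              exact Submodule.sub_mem _ (Submodule.add_mem _ hIin hUin) hchiR
            exact finish (S \ R) hcSD htD hUnot
              (ncross_lt (S \ R) not_crosses_sdiff (fun T hTR hXT => cl_sdiff hSR hTR hXT))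
          · exact finish (R \ S) hcRS htI' hIin
              (ncross_lt (R \ S) not_crosses_rdiff (fun T hTR hXT => cl_rdiff hSR hTR hXT))
      · -- ===== complement case: S ∪ R = univ =====
        have hUni : (S ∪ R)ᶜ = (∅ : Finset V) := Finset.not_nonempty_iff_eq_empty.mp hP4
        have hSc : Sᶜ = R \ S := by
          ext a
          simp only [Finset.mem_compl, Finset.mem_sdiff]
          constructor
          · intro h
            refine ⟨?_, h⟩
            by_contra haR
            have : a ∈ (S ∪ R)ᶜ := by
              simp only [Finset.mem_compl, Finset.mem_union]
              tauto
            rw [hUni] at this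
            exact Finset.notMem_empty a this
          · rintro ⟨-, h⟩; exact h
        refine finish Sᶜ (isCut_compl hcS) (isTight_compl hIsymm hHsymm htS)
          (by rw [chiCut_compl]; exact hSspan) ?_
        refine ncross_lt Sᶜ ?_ ?_
        · rw [hSc]; exact not_crosses_rdiff
        · intro T hTR hXT
          rw [hSc] at hXT
          exact cl_rdiff hSR hTR hXT
    · -- ===== no crossing: extend L, contradicting maximality =====
      push_neg at hcross
      have hSnotL : S ∉ L := fun hSL =>
        hSspan (Submodule.subset_span ⟨S, by simpa using hSL, rfl⟩)
      have hins : goodF (insert S L) := by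
        refine ⟨?_, ?_, ?_⟩
        · intro A hA
          rcases Finset.mem_insert.mp hA with rfl | hA'
          · exact ⟨hcS, hposS, htS⟩
          · exact hLP0 A hA'
        · intro A hA B hB
          rcases Finset.mem_insert.mp hA with rfl | hA' <;>
            rcases Finset.mem_insert.mp hB with rfl | hB'
          · exact Or.inr (Or.inl subset_rfl)
          · have hnc := hcross B hB'
            by_contra hcon
            push_neg at hcon
            exact hnc ⟨hcon.1, hcon.2.1, hcon.2.2⟩
          · have hnc := hcross A hA'
            by_contra hcon
            push_neg at hcon
            exact hnc ⟨fun hd => hcon.1 hd.symm, hcon.2.2, hcon.2.1⟩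
          · exact hLlam A hA' B hB'
        · -- linear independence after insertion
          have hiso : (fun A : {A : Finset V // A ∈ insert S L} => chiCut ends A.1) =
              (fun o : Option {A : Finset V // A ∈ L} =>
                Option.elim o (chiCut ends S) (fun A => chiCut ends A.1)) ∘
              (Finset.subtypeInsertEquivOption hSnotL) := by
            funext A
            rcases A with ⟨a, ha⟩
            by_cases h : a = S
            · subst h
              simp [Finset.subtypeInsertEquivOption]
            · simp [Finset.subtypeInsertEquivOption, h]
          rw [hiso]
          apply (linearIndependent_equiv (Finset.subtypeInsertEquivOption hSnotL)).mpr
          rw [linearIndependent_option]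
          refine ⟨hLind, ?_⟩
          have hr : Set.range ((fun o : Option {A : Finset V // A ∈ L} =>
              Option.elim o (chiCut ends S) (fun A => chiCut ends A.1)) ∘ some) =
              chiCut ends '' (L : Set (Finset V)) := range_chi_eq ends L
          rw [hr]
          exact hSspan
      have hmem𝒞 : insert S L ∈ 𝒞 := by
        rw [h𝒞def, Finset.mem_filter]
        exact ⟨Finset.mem_univ _, hins⟩
      have hle := hLmax _ hmem𝒞
      rw [Finset.card_insert_of_notMem hSnotL] at hle
      omega
end

section
/- Let k be an integer, I and H multigraphs on the finite set V, U ⊆ V, and let f and P be as defined. Let x ∈ P satisfy x_e > 0 for every e ∈ E. Call cuts A, B x-uncrossable if at least one of the following holds: (a) A∩B and A∪B are both x-tight and χ_{δ_E(A)} + χ_{δ_E(B)} = χ_{δ_E(A∩B)} + χ_{δ_E(A∪B)}; (b) A\B and B\A are both x-tight and χ_{δ_E(A)} + χ_{δ_E(B)} = χ_{δ_E(A\B)} + χ_{δ_E(B\A)}. If A and B are f-positive x-tight cuts that are not x-uncrossable, then A and B cross, A∩B = {u} or V\(A∪B) = {u} for some u ∈ U, and A\B = {v} or B\A = {v} for some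 v ∈ U. -/
open Finset

variable {V : Type*} [Fintype V] [DecidableEq V] {E : Type*} [Fintype E] [DecidableEq E]

/-- Cuts `A`, `B` cross if `A ∩ B`, `A \ B`, `B \ A` and `V \ (A ∪ B)` are all nonempty. -/
def Crosses (A B : Finset V) : Prop :=
  (A ∩ B).Nonempty ∧ (A \ B).Nonempty ∧ (B \ A).Nonempty ∧ ((A ∪ B)ᶜ).Nonempty

/-- Cuts `A`, `B` are `x`-uncrossable if either (a) `A ∩ B` and `A ∪ B` are both `x`-tight
and `χ_{δ(A)} + χ_{δ(B)} = χ_{δ(A ∩ B)} + χ_{δ(A ∪ B)}`, or (b) `A \ B` and `B \ A` are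
both `x`-tight and `χ_{δ(A)} + χ_{δ(B)} = χ_{δ(A \ B)} + χ_{δ(B \ A)}`. -/
def Uncrossable (k : ℤ) (I H : V → V → ℕ) (U : Finset V) (ends : E → V × V) (x : E → ℝ)
    (A B : Finset V) : Prop :=
  (IsTight k I H U ends x (A ∩ B) ∧ IsTight k I H U ends x (A ∪ B) ∧
    chiCut ends A + chiCut ends B = chiCut ends (A ∩ B) + chiCut ends (A ∪ B)) ∨
  (IsTight k I H U ends x (A \ B) ∧ IsTight k I H U ends x (B \ A) ∧
    chiCut ends A + chiCut ends B = chiCut ends (A \ B) + chiCut ends (B \ A))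

lemma cutEdges_compl (ends : E → V × V) (S : Finset V) :
    cutEdges ends Sᶜ = cutEdges ends S := by
  ext e; simp [cutEdges]; tauto

lemma chiCut_compl (ends : E → V × V) (S : Finset V) :
    chiCut ends Sᶜ = chiCut ends S := by
  unfold chiCut; rw [cutEdges_compl]

lemma dBetween_comm {m : V → V → ℕ} (hm : ∀ a b, m a b = m b a) (S T : Finset V) :
    dBetween m S T = dBetween m T S := by
  unfold dBetween
  rw [Finset.sum_comm]
  exact Finset.sum_congr rfl fun v _ => Finset.sum_congr rfl fun u _ => hm u v

lemma degS_compl {m : V → V → ℕ} (hm : ∀ a b, m a b = m b a) (S : Finset V) :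
    degS m Sᶜ = degS m S := by
  unfold degS
  rw [compl_compl]
  exact dBetween_comm hm _ _

lemma fRes_compl (k : ℤ) {I H : V → V → ℕ} (hI : ∀ a b, I a b = I b a)
    (hH : ∀ a b, H a b = H b a) (U : Finset V) (S : Finset V) :
    fRes k I H U Sᶜ = fRes k I H U S := by
  unfold fRes
  rw [degS_compl hI, degS_compl hH]
  have h : (∃ u ∈ U, Sᶜ = {u} ∨ Sᶜᶜ = {u}) ↔ (∃ u ∈ U, S = {u} ∨ Sᶜ = {u}) := by
    simp only [compl_compl]
    constructor <;> rintro ⟨u, hu, h⟩ <;> exact ⟨u, hu, h.symm⟩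
  rw [if_congr h rfl rfl]

lemma isTight_compl (k : ℤ) {I H : V → V → ℕ} (hI : ∀ a b, I a b = I b a)
    (hH : ∀ a b, H a b = H b a) (U : Finset V) (ends : E → V × V) (x : E → ℝ) (S : Finset V) :
    IsTight k I H U ends x Sᶜ ↔ IsTight k I H U ends x S := by
  unfold IsTight
  rw [cutEdges_compl, fRes_compl k hI hH]

lemma isCut_compl {S : Finset V} (hS : IsCut S) : IsCut Sᶜ :=
  ⟨Finset.nonempty_iff_ne_empty.2 fun h => hS.2 ((Finset.compl_eq_empty_iff _).1 h),
   fun h => (Finset.nonempty_iff_ne_empty.1 hS.1) ((Finset.compl_eq_univ_iff _).1 h)⟩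

lemma fRes_le (k : ℤ) (I H : V → V → ℕ) (U : Finset V) (S : Finset V) :
    fRes k I H U S ≤ k - (degS I S : ℤ) - 2 * (degS H S : ℤ) := by
  unfold fRes
  split <;> omega

lemma dBetween_eq (m : V → V → ℕ) (S T : Finset V) :
    dBetween m S T = ∑ u : V, ∑ v : V, if u ∈ S ∧ v ∈ T then m u v else 0 := by
  unfold dBetween
  have h : ∀ u : V, (∑ v : V, if u ∈ S ∧ v ∈ T then m u v else 0)
      = if u ∈ S then ∑ v ∈ T, m u v else 0 := by
    intro u
    by_cases hu : u ∈ S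
    · simp [hu, Finset.sum_ite_mem]
    · simp [hu]
  simp_rw [h]
  rw [Finset.sum_ite_mem, Finset.univ_inter]

lemma deg_split {m : V → V → ℕ} (hm : ∀ a b, m a b = m b a) (A B : Finset V) :
    degS m A + degS m B =
      degS m (A ∩ B) + degS m (A ∪ B) + 2 * dBetween m (A \ B) (B \ A) := by
  have key : ∀ u v : V,
      (if u ∈ A ∧ v ∈ Aᶜ then m u v else 0) + (if u ∈ B ∧ v ∈ Bᶜ then m u v else 0) =
      ((if u ∈ A ∩ B ∧ v ∈ (A ∩ B)ᶜ then m u v else 0) +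
      (if u ∈ A ∪ B ∧ v ∈ (A ∪ B)ᶜ then m u v else 0) +
      ((if u ∈ A \ B ∧ v ∈ B \ A then m u v else 0) +
      (if u ∈ B \ A ∧ v ∈ A \ B then m u v else 0))) := by
    intro u v
    by_cases h1 : u ∈ A <;> by_cases h2 : u ∈ B <;> by_cases h3 : v ∈ A <;> by_cases h4 : v ∈ B <;>
      simp [h1, h2, h3, h4]
  have h2 : dBetween m (B \ A) (A \ B) = dBetween m (A \ B) (B \ A) := dBetween_comm hm _ _
  unfold degS
  rw [two_mul]
  nth_rewrite 2 [← h2]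
  rw [dBetween_eq m A, dBetween_eq m B, dBetween_eq m (A ∩ B), dBetween_eq m (A ∪ B),
    dBetween_eq m (A \ B), dBetween_eq m (B \ A)]
  simp only [← Finset.sum_add_distrib]
  exact Finset.sum_congr rfl fun u _ => Finset.sum_congr rfl fun v _ => key u v

/-- Edges with one endpoint in `S` and the other in `T`. -/
def midEdges (ends : E → V × V) (S T : Finset V) : Finset E :=
  univ.filter fun e => ((ends e).1 ∈ S ∧ (ends e).2 ∈ T) ∨ ((ends e).1 ∈ T ∧ (ends e).2 ∈ S)

lemma perEdge (ends : E → V × V) (A B : Finset V) (e : E) :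
    chiCut ends A e + chiCut ends B e =
    chiCut ends (A ∩ B) e + chiCut ends (A ∪ B) e +
      2 * (if e ∈ midEdges ends (A \ B) (B \ A) then (1:ℝ) else 0) := by
  simp only [chiCut, cutEdges, midEdges, mem_filter, mem_univ, true_and,
    mem_inter, mem_union, mem_sdiff]
  by_cases h1 : (ends e).1 ∈ A <;> by_cases h2 : (ends e).1 ∈ B <;>
    by_cases h3 : (ends e).2 ∈ A <;> by_cases h4 : (ends e).2 ∈ B <;>
    simp [h1, h2, h3, h4] <;> norm_num

lemma sumCut_eq (ends : E → V × V) (x : E → ℝ) (S : Finset V) :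
    ∑ e ∈ cutEdges ends S, x e = ∑ e : E, chiCut ends S e * x e := by
  simp only [chiCut, ite_mul, one_mul, zero_mul, Finset.sum_ite_mem, Finset.univ_inter]

lemma sumMid_eq (ends : E → V × V) (x : E → ℝ) (S T : Finset V) :
    ∑ e ∈ midEdges ends S T, x e
      = ∑ e : E, (if e ∈ midEdges ends S T then (1:ℝ) else 0) * x e := by
  simp only [ite_mul, one_mul, zero_mul, Finset.sum_ite_mem, Finset.univ_inter]

lemma sum_split (ends : E → V × V) (x : E → ℝ) (A B : Finset V) :
    ∑ e ∈ cutEdges ends A, x e + ∑ e ∈ cutEdges ends B, x e =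
      ∑ e ∈ cutEdges ends (A ∩ B), x e + ∑ e ∈ cutEdges ends (A ∪ B), x e +
        2 * ∑ e ∈ midEdges ends (A \ B) (B \ A), x e := by
  rw [sumCut_eq, sumCut_eq, sumCut_eq, sumCut_eq, sumMid_eq, Finset.mul_sum]
  simp only [← Finset.sum_add_distrib]
  apply Finset.sum_congr rfl
  intro e _
  have h := perEdge ends A B e
  linear_combination x e * h

lemma key_step (k : ℤ) {I H : V → V → ℕ}
    (hIsymm : ∀ a b, I a b = I b a) (hHsymm : ∀ a b, H a b = H b a)
    (U : Finset V) (ends : E → V × V)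
    (x : E → ℝ) (hxP : x ∈ polyP k I H U ends) (hxe : ∀ e, 0 < x e)
    (A B : Finset V)
    (htA : IsTight k I H U ends x A) (htB : IsTight k I H U ends x B)
    (hcr : Crosses A B)
    (hna : ¬ (IsTight k I H U ends x (A ∩ B) ∧ IsTight k I H U ends x (A ∪ B) ∧
      chiCut ends A + chiCut ends B = chiCut ends (A ∩ B) + chiCut ends (A ∪ B))) :
    ∃ u ∈ U, A ∩ B = {u} ∨ (A ∪ B)ᶜ = {u} := by
  by_contra hcon
  push_neg at hcon
  obtain ⟨⟨d0, hd0⟩, ⟨a, ha⟩, ⟨b, hb⟩, ⟨c, hc⟩⟩ := hcr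
  rw [mem_sdiff] at ha hb
  rw [mem_compl, mem_union] at hc
  push_neg at hc
  have hab : a ≠ b := fun h => hb.2 (h ▸ ha.1)
  have hcutI : IsCut (A ∩ B) :=
    ⟨⟨d0, hd0⟩, fun h => ha.2 (mem_inter.1 (h.symm ▸ mem_univ a)).2⟩
  have hcutU : IsCut (A ∪ B) :=
    ⟨⟨d0, mem_union_left _ (mem_inter.1 hd0).1⟩,
     fun h => (mem_union.1 (h.symm ▸ mem_univ c)).elim hc.1 hc.2⟩
  have hfI : fRes k I H U (A ∩ B) = k - (degS I (A ∩ B) : ℤ) - 2 * (degS H (A ∩ B) : ℤ) := by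
    unfold fRes
    rw [if_neg]
    rintro ⟨u, hu, h | h⟩
    · exact (hcon u hu).1 h
    · have haM : a ∈ (A ∩ B)ᶜ := by simp [Finset.mem_compl, Finset.mem_inter, ha.2]
      have hbM : b ∈ (A ∩ B)ᶜ := by simp [Finset.mem_compl, Finset.mem_inter, hb.2]
      rw [h, mem_singleton] at haM hbM
      exact hab (haM.trans hbM.symm)
  have hfU : fRes k I H U (A ∪ B) = k - (degS I (A ∪ B) : ℤ) - 2 * (degS H (A ∪ B) : ℤ) := by
    unfold fRes
    rw [if_neg]
    rintro ⟨u, hu, h | h⟩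
    · have haM : a ∈ A ∪ B := mem_union_left _ ha.1
      have hbM : b ∈ A ∪ B := mem_union_right _ hb.1
      rw [h, mem_singleton] at haM hbM
      exact hab (haM.trans hbM.symm)
    · exact (hcon u hu).2 h
  have hPI := hxP.2 (A ∩ B) hcutI
  have hPU := hxP.2 (A ∪ B) hcutU
  have hSI := sum_split ends x A B
  have hDI := deg_split hIsymm A B
  have hDH := deg_split hHsymm A B
  have hleA := fRes_le k I H U A
  have hleB := fRes_le k I H U B
  have hxM : (0:ℝ) ≤ ∑ e ∈ midEdges ends (A \ B) (B \ A), x e :=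
    Finset.sum_nonneg fun e _ => (hxe e).le
  unfold IsTight at htA htB
  have hleAr : (fRes k I H U A : ℝ) ≤ (k:ℝ) - (degS I A : ℝ) - 2 * (degS H A : ℝ) := by
    exact_mod_cast hleA
  have hleBr : (fRes k I H U B : ℝ) ≤ (k:ℝ) - (degS I B : ℝ) - 2 * (degS H B : ℝ) := by
    exact_mod_cast hleB
  have hfIr : (fRes k I H U (A ∩ B) : ℝ)
      = (k:ℝ) - (degS I (A ∩ B) : ℝ) - 2 * (degS H (A ∩ B) : ℝ) := by exact_mod_cast hfI
  have hfUr : (fRes k I H U (A ∪ B) : ℝ)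
      = (k:ℝ) - (degS I (A ∪ B) : ℝ) - 2 * (degS H (A ∪ B) : ℝ) := by exact_mod_cast hfU
  have hDIr : (degS I A : ℝ) + (degS I B : ℝ) = (degS I (A ∩ B) : ℝ) + (degS I (A ∪ B) : ℝ)
      + 2 * (dBetween I (A \ B) (B \ A) : ℝ) := by exact_mod_cast hDI
  have hDHr : (degS H A : ℝ) + (degS H B : ℝ) = (degS H (A ∩ B) : ℝ) + (degS H (A ∪ B) : ℝ)
      + 2 * (dBetween H (A \ B) (B \ A) : ℝ) := by exact_mod_cast hDH
  have hmI : (0:ℝ) ≤ (dBetween I (A \ B) (B \ A) : ℝ) := by positivity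
  have hmH : (0:ℝ) ≤ (dBetween H (A \ B) (B \ A) : ℝ) := by positivity
  have htI : ∑ e ∈ cutEdges ends (A ∩ B), x e = (fRes k I H U (A ∩ B) : ℝ) := by linarith
  have htU : ∑ e ∈ cutEdges ends (A ∪ B), x e = (fRes k I H U (A ∪ B) : ℝ) := by linarith
  have hM0 : ∑ e ∈ midEdges ends (A \ B) (B \ A), x e = 0 := by linarith
  have hMempty : midEdges ends (A \ B) (B \ A) = ∅ := by
    by_contra hne
    have := Finset.sum_pos (fun e _ => hxe e) (Finset.nonempty_iff_ne_empty.2 hne)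
    linarith
  have hchi : chiCut ends A + chiCut ends B
      = chiCut ends (A ∩ B) + chiCut ends (A ∪ B) := by
    funext e
    have h := perEdge ends A B e
    rw [hMempty] at h
    simp only [Finset.notMem_empty, if_false, mul_zero, add_zero] at h
    simpa using h
  exact hna ⟨htI, htU, hchi⟩

/-- Claim in Lemma 4.3: if `A`, `B` are `f`-positive `x`-tight cuts that are not
`x`-uncrossable, then `A`, `B` cross, `A ∩ B` or `V \ (A ∪ B)` is a singleton of `U`,
and `A \ B` or `B \ A` is a singleton of `U`. -/
theorem not_uncrossable_cuts_cross
    (k : ℤ) (I H : V → V → ℕ)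
    (hIsymm : ∀ a b, I a b = I b a) (hHsymm : ∀ a b, H a b = H b a)
    (U : Finset V) (ends : E → V × V)
    (x : E → ℝ) (hxP : x ∈ polyP k I H U ends) (hxe : ∀ e, 0 < x e)
    (A B : Finset V) (hA : IsCut A) (hB : IsCut B)
    (hfA : 0 < fRes k I H U A) (hfB : 0 < fRes k I H U B)
    (htA : IsTight k I H U ends x A) (htB : IsTight k I H U ends x B)
    (hnc : ¬ Uncrossable k I H U ends x A B) :
    Crosses A B ∧
    (∃ u ∈ U, A ∩ B = {u} ∨ (A ∪ B)ᶜ = {u}) ∧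
    (∃ v ∈ U, A \ B = {v} ∨ B \ A = {v}) := by
  have tc := isTight_compl k hIsymm hHsymm U ends x
  have hcr : Crosses A B := by
    by_cases h1 : (A ∩ B).Nonempty
    · by_cases h2 : (A \ B).Nonempty
      · by_cases h3 : (B \ A).Nonempty
        · by_cases h4 : ((A ∪ B)ᶜ).Nonempty
          · exact ⟨h1, h2, h3, h4⟩
          · exfalso; apply hnc; right
            rw [Finset.not_nonempty_iff_eq_empty] at h4
            have hu : A ∪ B = univ := (Finset.compl_eq_empty_iff _).1 h4
            have eA : A \ B = Bᶜ := by
              ext v; simp only [mem_sdiff, mem_compl]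
              constructor
              · rintro ⟨_, h⟩; exact h
              · intro hv
                rcases mem_union.1 (hu.symm ▸ mem_univ v) with h | h
                · exact ⟨h, hv⟩
                · exact absurd h hv
            have eB : B \ A = Aᶜ := by
              ext v; simp only [mem_sdiff, mem_compl]
              constructor
              · rintro ⟨_, h⟩; exact h
              · intro hv
                rcases mem_union.1 (hu.symm ▸ mem_univ v) with h | h
                · exact absurd h hv
                · exact ⟨h, hv⟩
            refine ⟨?_, ?_, ?_⟩
            · rw [eA]; exact (tc B).2 htB
            · rw [eB]; exact (tc A).2 htA
            · rw [eA, eB, chiCut_compl, chiCut_compl]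
              exact add_comm _ _
        · exfalso; apply hnc; left
          rw [Finset.not_nonempty_iff_eq_empty, Finset.sdiff_eq_empty_iff_subset] at h3
          rw [Finset.inter_eq_right.2 h3, Finset.union_eq_left.2 h3]
          exact ⟨htB, htA, add_comm _ _⟩
      · exfalso; apply hnc; left
        rw [Finset.not_nonempty_iff_eq_empty, Finset.sdiff_eq_empty_iff_subset] at h2
        rw [Finset.inter_eq_left.2 h2, Finset.union_eq_right.2 h2]
        exact ⟨htA, htB, rfl⟩
    · exfalso; apply hnc; right
      rw [Finset.not_nonempty_iff_eq_empty] at h1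
      have eA : A \ B = A := by
        ext v; simp only [mem_sdiff, and_iff_left_iff_imp]
        intro hv hvB
        exact absurd (mem_inter.2 ⟨hv, hvB⟩) (by simp [h1])
      have eB : B \ A = B := by
        ext v; simp only [mem_sdiff, and_iff_left_iff_imp]
        intro hv hvA
        exact absurd (mem_inter.2 ⟨hvA, hv⟩) (by simp [h1])
      rw [eA, eB]
      exact ⟨htA, htB, rfl⟩
  refine ⟨hcr, ?_, ?_⟩
  · exact key_step k hIsymm hHsymm U ends x hxP hxe A B htA htB hcr
      (fun h => hnc (Or.inl h))
  · -- apply key_step to A, Bᶜ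
    have e1 : A ∩ Bᶜ = A \ B := by ext v; simp [mem_sdiff]
    have e2 : A ∪ Bᶜ = (B \ A)ᶜ := by ext v; simp [mem_sdiff]; tauto
    have e3 : Bᶜ \ A = (A ∪ B)ᶜ := by ext v; simp [mem_sdiff]; tauto
    have e4 : A \ Bᶜ = A ∩ B := by ext v; simp [mem_sdiff]
    have e5 : (A ∪ Bᶜ)ᶜ = B \ A := by rw [e2, compl_compl]
    have hcr' : Crosses A Bᶜ := by
      refine ⟨?_, ?_, ?_, ?_⟩
      · rw [e1]; exact hcr.2.1
      · rw [e4]; exact hcr.1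
      · rw [e3]; exact hcr.2.2.2
      · rw [e5]; exact hcr.2.2.1
    have hna' : ¬ (IsTight k I H U ends x (A ∩ Bᶜ) ∧ IsTight k I H U ends x (A ∪ Bᶜ) ∧
        chiCut ends A + chiCut ends Bᶜ = chiCut ends (A ∩ Bᶜ) + chiCut ends (A ∪ Bᶜ)) := by
      rintro ⟨t1, t2, t3⟩
      apply hnc
      right
      rw [e1] at t1
      rw [e2] at t2
      rw [e1, e2] at t3
      simp only [chiCut_compl] at t3
      exact ⟨t1, (tc (B \ A)).1 t2, t3⟩
    obtain ⟨u, hu, h⟩ := key_step k hIsymm hHsymm U ends x hxP hxe A Bᶜ htA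
      ((tc B).2 htB) hcr' hna'
    rw [e1, e5] at h
    exact ⟨u, hu, h⟩
end
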